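/- arXiv:2207.07523 — 3 statements merged into one kernel-verified Lean document; each statement's English description precedes it below -/
import Mathlib

section
/- For any ε > 0 there exists N(ε) ∈ ℕ such that for every natural number n > N(ε) one can find an even number m with (1−ε)n ≤ m ≤ (1+ε)n for which there exists an Hadamard matrix of size m × m. -/
open Matrix Kronecker

/-- An `m × m` matrix with `±1` entries is Hadamard if `H Hᵀ = m • I`. -/
def IsHadamard {m : ℕ} (H : Matrix (Fin m) (Fin m) ℝ) : Prop :=
  (∀ i j, H i j = 1 ∨ H i j = -1) ∧ H * Hᵀ = (m : ℝ) • 1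


def HadOrder (m : ℕ) : Prop := ∃ H : Matrix (Fin m) (Fin m) ℝ, _root_.IsHadamard H

lemma hadOrder_of_int {m : ℕ} (H : Matrix (Fin m) (Fin m) ℤ)
    (h1 : ∀ i j, H i j = 1 ∨ H i j = -1) (h2 : H * Hᵀ = (m : ℤ) • 1) : HadOrder m := by
  refine ⟨H.map ⇑(Int.castRingHom ℝ), fun i j => ?_, ?_⟩
  · rcases h1 i j with h | h <;> simp [Matrix.map_apply, h]
  · have : (H.map ⇑(Int.castRingHom ℝ)) * (H.map ⇑(Int.castRingHom ℝ))ᵀ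
        = (H * Hᵀ).map ⇑(Int.castRingHom ℝ) := by
      rw [← Matrix.transpose_map, ← Matrix.map_mul]
    rw [this, h2]
    ext i j
    simp only [Matrix.map_apply, Matrix.smul_apply, Matrix.one_apply, smul_eq_mul,
      mul_ite, mul_one, mul_zero]
    split <;> simp

lemma hadOrder_one : HadOrder 1 :=
  hadOrder_of_int 1 (fun i j => by fin_cases i; fin_cases j; simp) (by decide)

lemma hadOrder_two : HadOrder 2 :=
  hadOrder_of_int !![1,1;1,-1] (by simp only [Matrix.of_apply]; decide) (by decide)

lemma hadOrder_twelve : HadOrder 12 :=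
  hadOrder_of_int !![1, 1, 1, 1, 1, 1, 1, 1, 1, 1, 1, 1;
     1, -1, -1, 1, -1, -1, -1, 1, 1, 1, -1, 1;
     1, 1, -1, -1, 1, -1, -1, -1, 1, 1, 1, -1;
     1, -1, 1, -1, -1, 1, -1, -1, -1, 1, 1, 1;
     1, 1, -1, 1, -1, -1, 1, -1, -1, -1, 1, 1;
     1, 1, 1, -1, 1, -1, -1, 1, -1, -1, -1, 1;
     1, 1, 1, 1, -1, 1, -1, -1, 1, -1, -1, -1;
     1, -1, 1, 1, 1, -1, 1, -1, -1, 1, -1, -1;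
     1, -1, -1, 1, 1, 1, -1, 1, -1, -1, 1, -1;
     1, -1, -1, -1, 1, 1, 1, -1, 1, -1, -1, 1;
     1, 1, -1, -1, -1, 1, 1, 1, -1, 1, -1, -1;
     1, -1, 1, -1, -1, -1, 1, 1, 1, -1, 1, -1] (by simp only [Matrix.of_apply]; decide) (by decide)


lemma hadOrder_mul {a b : ℕ} (ha : HadOrder a) (hb : HadOrder b) : HadOrder (a * b) := by
  obtain ⟨H, hH1, hH2⟩ := ha
  obtain ⟨K, hK1, hK2⟩ := hb
  refine ⟨Matrix.reindex finProdFinEquiv finProdFinEquiv (H ⊗ₖ K), ?_, ?_⟩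
  · intro i j
    simp only [Matrix.reindex_apply, Matrix.submatrix_apply, Matrix.kroneckerMap_apply]
    rcases hH1 (finProdFinEquiv.symm i).1 (finProdFinEquiv.symm j).1 with h | h <;>
      rcases hK1 (finProdFinEquiv.symm i).2 (finProdFinEquiv.symm j).2 with h' | h' <;>
      rw [h, h'] <;> norm_num
  · have key : (H ⊗ₖ K) * (H ⊗ₖ K)ᵀ = ((a * b : ℕ) : ℝ) • 1 := by
      rw [← Matrix.kroneckerMap_transpose, ← Matrix.mul_kronecker_mul, hH2, hK2,
        Matrix.smul_kronecker, Matrix.kronecker_smul, Matrix.one_kronecker_one, smul_smul]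
      push_cast
      ring_nf
    rw [Matrix.reindex_apply, Matrix.transpose_submatrix, Matrix.submatrix_mul_equiv, key]
    ext i j
    simp only [Matrix.submatrix_apply, Matrix.smul_apply, Matrix.one_apply, smul_eq_mul,
      mul_ite, mul_one, mul_zero]
    refine if_congr ⟨fun h => finProdFinEquiv.symm.injective ?_, fun h => by subst h; simp⟩ rfl rfl
    simpa only [finProdFinEquiv_symm_apply, Prod.mk.injEq] using h

lemma hadOrder_pow {a : ℕ} (ha : HadOrder a) (hone : HadOrder 1) : ∀ x : ℕ, HadOrder (a ^ x) := by
  intro x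
  induction x with
  | zero => simpa using hone
  | succ n ih => rw [pow_succ]; exact hadOrder_mul ih ha

lemma dense_pow_prod {ρ : ℝ} (hρ : 1 < ρ) {a b : ℕ} (ha : 1 < a) (hab : a < b)
    (hb : (b : ℝ) < ρ * a) :
    ∃ N : ℕ, ∀ n : ℕ, n > N → ∃ x y : ℕ,
      (n : ℝ) ≤ (a ^ x * b ^ (y + 1) : ℕ) ∧ ((a ^ x * b ^ (y + 1) : ℕ) : ℝ) ≤ ρ * n := by
  have ha0 : (0:ℝ) < a := by positivity
  have hab1 : (1:ℝ) < (b:ℝ) / a := by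
    rw [lt_div_iff₀ ha0, one_mul]; exact_mod_cast hab
  obtain ⟨M0, hM0⟩ := pow_unbounded_of_one_lt (ρ * a) hab1
  refine ⟨a ^ M0, fun n hn => ?_⟩
  have hn0 : n ≠ 0 := by
    have := Nat.one_le_pow M0 a (by omega)
    omega
  set M := Nat.log a n with hM
  have hM0M : M0 ≤ M := (Nat.le_log_iff_pow_le ha hn0).mpr hn.le
  have hsM : (ρ * n : ℝ) < (b ^ M : ℕ) := by
    have h1 : ((b:ℝ)/a) ^ M0 ≤ ((b:ℝ)/a) ^ M := pow_le_pow_right₀ hab1.le hM0M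
    have h2 : (n : ℝ) < (a:ℝ) ^ (M + 1) := by
      exact_mod_cast Nat.lt_pow_succ_log_self ha n
    have h3 : ((b:ℝ)) ^ M = (a:ℝ) ^ M * ((b:ℝ)/a) ^ M := by
      rw [div_pow, mul_comm, div_mul_cancel₀ _ (by positivity : (a:ℝ)^M ≠ 0)]
    push_cast
    calc ρ * n < ρ * (a:ℝ) ^ (M+1) := by
          apply mul_lt_mul_of_pos_left h2 (by linarith)
      _ = (a:ℝ)^M * (ρ * a) := by ring
      _ < (a:ℝ)^M * ((b:ℝ)/a) ^ M := by
          apply mul_lt_mul_of_pos_left (lt_of_lt_of_le hM0 h1) (by positivity)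
      _ = (b:ℝ) ^ M := h3.symm
  have hnsM : n < b ^ M := by
    have : (n:ℝ) < (b ^ M : ℕ) :=
      lt_of_le_of_lt (le_mul_of_one_le_left (by positivity) hρ.le) hsM
    exact_mod_cast this
  -- the sequence s i = a^(M-i) * b^i
  set s : ℕ → ℕ := fun i => a ^ (M - i) * b ^ i with hs
  have hT0 : s 0 ≤ n := by simpa [hs] using Nat.pow_log_le_self a hn0
  set T := (Finset.range (M + 1)).filter (fun i => s i ≤ n) with hT
  have hTne : T.Nonempty := ⟨0, by simp [hT, hT0]⟩
  set i := T.max' hTne with hi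
  have hiT : i ∈ T := T.max'_mem hTne
  have hiM : i ≤ M := by
    have := (Finset.mem_filter.mp hiT).1
    simpa [Nat.lt_succ_iff] using this
  have hsi : s i ≤ n := (Finset.mem_filter.mp hiT).2
  have hiltM : i < M := by
    rcases lt_or_eq_of_le hiM with h | h
    · exact h
    · exfalso; rw [h] at hsi
      simp only [hs, Nat.sub_self, pow_zero, one_mul] at hsi
      omega
  have hnotT : ¬ s (i + 1) ≤ n := by
    intro hle
    have : i + 1 ∈ T := Finset.mem_filter.mpr ⟨Finset.mem_range.mpr (by omega), hle⟩
    have := T.le_max' _ this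
    omega
  refine ⟨M - i - 1, i, ?_, ?_⟩
  · have : n < s (i+1) := by omega
    have : (n:ℝ) ≤ (s (i+1) : ℕ) := by exact_mod_cast this.le
    simpa [hs, Nat.sub_sub] using this
  · -- a * s (i+1) = s i * b
    have hkey : a * s (i + 1) = s i * b := by
      simp only [hs]
      have : a * a ^ (M - (i+1)) = a ^ (M - i) := by
        rw [← pow_succ']
        congr 1
        omega
      rw [← mul_assoc, this, pow_succ]
      ring
    have h1 : (a:ℝ) * s (i+1) = (s i : ℕ) * b := by exact_mod_cast congrArg (Nat.cast : ℕ → ℝ) hkey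
    have h2 : ((s i : ℕ) : ℝ) ≤ n := by exact_mod_cast hsi
    have h3 : (a:ℝ) * (s (i+1) : ℕ) ≤ (a:ℝ) * (ρ * n) := by
      rw [h1]
      calc ((s i : ℕ) : ℝ) * b ≤ (n:ℝ) * b := by
            apply mul_le_mul_of_nonneg_right h2 (by positivity)
        _ ≤ (n:ℝ) * (ρ * a) := by
            apply mul_le_mul_of_nonneg_left hb.le (by positivity)
        _ = (a:ℝ) * (ρ * n) := by ring
    have h4 : ((s (i+1) : ℕ) : ℝ) ≤ ρ * n := le_of_mul_le_mul_left h3 ha0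
    have : s (i + 1) = a ^ (M - i - 1) * b ^ (i + 1) := by
      simp only [hs, Nat.sub_sub]
    rw [← this]
    exact h4

lemma exists_close_powers {δ : ℝ} (hδ : 0 < δ) :
    ∃ p q : ℕ, 1 ≤ q ∧ 2 ≤ p ∧
      (((q : ℝ) * Real.log 12 - p * Real.log 2) ∈ Set.Ioo 0 δ ∨
       ((p : ℝ) * Real.log 2 - q * Real.log 12) ∈ Set.Ioo 0 δ) := by
  have hL2 : 0 < Real.log 2 := Real.log_pos (by norm_num)
  have hL12 : 0 < Real.log 12 := Real.log_pos (by norm_num)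
  set τ : ℝ := Real.log 12 / Real.log 2 with hτ
  have hτL : τ * Real.log 2 = Real.log 12 := div_mul_cancel₀ _ (ne_of_gt hL2)
  have hτ3 : 3 < τ := by
    rw [hτ, lt_div_iff₀ hL2]
    have h8 : (3:ℝ) * Real.log 2 = Real.log (2 ^ (3:ℕ)) := by
      rw [Real.log_pow]; norm_num
    rw [h8]
    exact Real.log_lt_log (by norm_num) (by norm_num)
  obtain ⟨n0, hn0⟩ := exists_nat_gt (Real.log 2 / δ)
  obtain ⟨p, q, hq0, hqn, happ⟩ := Real.exists_int_int_abs_mul_sub_le τ (Nat.succ_pos n0)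
  have hbound : (1:ℝ) / (n0 + 1 + 1) ≤ 1 := by
    rw [div_le_one (by positivity)]; linarith [Nat.cast_nonneg (α := ℝ) n0]
  have happ' : |(q:ℝ) * τ - p| ≤ 1 := le_trans (by exact_mod_cast happ) hbound
  have hq1 : (1:ℝ) ≤ (q:ℝ) := by exact_mod_cast hq0
  have hp2 : (2:ℝ) < (p:ℝ) := by
    have h1 : (q:ℝ) * τ - p ≤ 1 := le_trans (le_abs_self _) happ'
    nlinarith
  -- the main difference D
  set D : ℝ := (q:ℝ) * Real.log 12 - p * Real.log 2 with hD
  have hDeq : D = ((q:ℝ) * τ - p) * Real.log 2 := by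
    rw [hD]; rw [sub_mul, mul_assoc, hτL]
  have hDlt : |D| < δ := by
    rw [hDeq, abs_mul, abs_of_pos hL2]
    have h1 : |(q:ℝ) * τ - p| ≤ 1 / (n0 + 1 + 1) := by exact_mod_cast happ
    have h2 : Real.log 2 < (n0 + 1 + 1) * δ := by
      have : Real.log 2 / δ < n0 + 1 + 1 := by
        linarith
      calc Real.log 2 = Real.log 2 / δ * δ := by field_simp
        _ < ((n0:ℝ) + 1 + 1) * δ := by
            apply mul_lt_mul_of_pos_right this hδ
    calc |(q:ℝ) * τ - p| * Real.log 2 ≤ 1 / ((n0:ℝ) + 1 + 1) * Real.log 2 := by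
          apply mul_le_mul_of_nonneg_right h1 hL2.le
      _ < δ := by
          rw [div_mul_eq_mul_div, one_mul, div_lt_iff₀ (by positivity)]
          linarith
  have hDne : D ≠ 0 := by
    intro h0
    have hqτ : (q:ℝ) * Real.log 12 = p * Real.log 2 := by
      rw [hD] at h0; linarith
    have hqn' : q = (q.toNat : ℤ) := (Int.toNat_of_nonneg hq0.le).symm
    have hpn' : p = (p.toNat : ℤ) := (Int.toNat_of_nonneg (by exact_mod_cast (by linarith : (0:ℝ) ≤ (p:ℝ)))).symm
    have hlog : Real.log ((12:ℝ) ^ q.toNat) = Real.log ((2:ℝ) ^ p.toNat) := by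
      rw [Real.log_pow, Real.log_pow]
      rw [hqn'] at hqτ; rw [hpn'] at hqτ
      exact_mod_cast hqτ
    have heq : (12:ℝ) ^ q.toNat = (2:ℝ) ^ p.toNat := by
      have e1 := Real.exp_log (show (0:ℝ) < (12:ℝ) ^ q.toNat by positivity)
      have e2 := Real.exp_log (show (0:ℝ) < (2:ℝ) ^ p.toNat by positivity)
      rw [← e1, ← e2, hlog]
    have heqn : (12:ℕ) ^ q.toNat = 2 ^ p.toNat := by exact_mod_cast heq
    have h3 : (3:ℕ) ∣ 12 ^ q.toNat := dvd_pow (by norm_num) (by omega : q.toNat ≠ 0)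
    rw [heqn] at h3
    have hcop : Nat.Coprime 3 (2 ^ p.toNat) := Nat.Coprime.pow_right _ (by norm_num)
    exact absurd (hcop.eq_one_of_dvd h3) (by norm_num)
  have hpc : ((p.toNat : ℕ) : ℝ) = (p : ℝ) := by
    exact_mod_cast congrArg (fun z : ℤ => (z : ℝ)) (Int.toNat_of_nonneg (by exact_mod_cast (by linarith : (0:ℝ) ≤ (p:ℝ))))
  have hqc : ((q.toNat : ℕ) : ℝ) = (q : ℝ) := by
    exact_mod_cast congrArg (fun z : ℤ => (z : ℝ)) (Int.toNat_of_nonneg hq0.le)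
  refine ⟨p.toNat, q.toNat, ?_, ?_, ?_⟩
  · have : (1:ℝ) ≤ ((q.toNat : ℕ) : ℝ) := by rw [hqc]; exact hq1
    exact_mod_cast this
  · have h : (2:ℝ) < ((p.toNat : ℕ) : ℝ) := by rw [hpc]; exact hp2
    have : 2 < p.toNat := by exact_mod_cast h
    omega
  · rcases hDne.lt_or_gt with hneg | hpos
    · right
      have : |D| = -D := abs_of_neg hneg
      constructor
      · rw [hpc, hqc]; rw [hD] at hneg; linarith
      · rw [hpc, hqc]; rw [this, hD] at hDlt; linarith
    · left
      have : |D| = D := abs_of_pos hpos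
      constructor
      · rw [hpc, hqc]; rw [hD] at hpos; linarith
      · rw [hpc, hqc]; rw [this, hD] at hDlt; linarith

lemma main_aux {e : ℝ} (he : 0 < e) {a b : ℕ} (ha : 1 < a) (hab : a < b)
    (hb : (b : ℝ) < (1 + e) * a) (hHa : HadOrder a) (hHb : HadOrder b) (heb : Even b) :
    ∃ N : ℕ, ∀ n : ℕ, n > N → ∃ m : ℕ, Even m ∧ (n : ℝ) ≤ m ∧ (m : ℝ) ≤ (1 + e) * n ∧
      HadOrder m := by
  obtain ⟨N, hN⟩ := dense_pow_prod (by linarith : (1:ℝ) < 1 + e) ha hab hb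
  refine ⟨N, fun n hn => ?_⟩
  obtain ⟨x, y, h1, h2⟩ := hN n hn
  refine ⟨a ^ x * b ^ (y + 1), ?_, h1, h2, ?_⟩
  · have h2b : (2:ℕ) ∣ b := heb.two_dvd
    have : (2:ℕ) ∣ a ^ x * b ^ (y + 1) :=
      dvd_trans (dvd_trans h2b (dvd_pow_self b (Nat.succ_ne_zero y))) (dvd_mul_left _ _)
    exact (Nat.even_iff).mpr (Nat.mod_eq_zero_of_dvd this)
  · exact hadOrder_mul (hadOrder_pow hHa hadOrder_one x) (hadOrder_pow hHb hadOrder_one (y + 1))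

/-- **Corollary 2.2.** For any `ε > 0` there is `N(ε)` such that every `n > N(ε)` admits an
even number `m ∈ [(1-ε)n, (1+ε)n]` for which an `m × m` Hadamard matrix exists. -/
theorem hadamard_exists_near_n {ε : ℝ} (hε : 0 < ε) :
    ∃ N : ℕ, ∀ n : ℕ, n > N →
      ∃ m : ℕ, Even m ∧ (1 - ε) * n ≤ (m : ℝ) ∧ (m : ℝ) ≤ (1 + ε) * n ∧
        ∃ H : Matrix (Fin m) (Fin m) ℝ, _root_.IsHadamard H := by
  have hδ : 0 < Real.log (1 + ε) := Real.log_pos (by linarith)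
  obtain ⟨p, q, hq1, hp2, hcase⟩ := exists_close_powers hδ
  have hL2 : 0 < Real.log 2 := Real.log_pos (by norm_num)
  have hL12 : 0 < Real.log 12 := Real.log_pos (by norm_num)
  have e2 : ((2 ^ p : ℕ) : ℝ) = Real.exp ((p : ℝ) * Real.log 2) := by
    rw [Real.exp_nat_mul, Real.exp_log (by norm_num : (0:ℝ) < 2)]
    push_cast; ring
  have e12 : ((12 ^ q : ℕ) : ℝ) = Real.exp ((q : ℝ) * Real.log 12) := by
    rw [Real.exp_nat_mul, Real.exp_log (by norm_num : (0:ℝ) < 12)]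
    push_cast; ring
  have hexpδ : Real.exp (Real.log (1 + ε)) = 1 + ε := Real.exp_log (by linarith)
  have key : ∃ N : ℕ, ∀ n : ℕ, n > N → ∃ m : ℕ, Even m ∧ (n : ℝ) ≤ m ∧
      (m : ℝ) ≤ (1 + ε) * n ∧ HadOrder m := by
    rcases hcase with hIoo | hIoo
    · -- 2^p < 12^q < (1+ε) 2^p
      obtain ⟨hgt, hlt⟩ := hIoo
      have hab : (2 ^ p : ℕ) < 12 ^ q := by
        have : ((2 ^ p : ℕ) : ℝ) < ((12 ^ q : ℕ) : ℝ) := by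
          rw [e2, e12]; exact Real.exp_lt_exp.mpr (by linarith)
        exact_mod_cast this
      have hba : ((12 ^ q : ℕ) : ℝ) < (1 + ε) * ((2 ^ p : ℕ) : ℝ) := by
        rw [e2, e12, ← hexpδ, ← Real.exp_add]
        exact Real.exp_lt_exp.mpr (by linarith)
      exact main_aux hε (Nat.one_lt_two_pow_iff.mpr (by omega)) hab hba
        (hadOrder_pow hadOrder_two hadOrder_one p)
        (hadOrder_pow hadOrder_twelve hadOrder_one q)
        ((Nat.even_pow).mpr ⟨by decide, by omega⟩)
    · -- 12^q < 2^p < (1+ε) 12^q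
      obtain ⟨hgt, hlt⟩ := hIoo
      have hab : (12 ^ q : ℕ) < 2 ^ p := by
        have : ((12 ^ q : ℕ) : ℝ) < ((2 ^ p : ℕ) : ℝ) := by
          rw [e2, e12]; exact Real.exp_lt_exp.mpr (by linarith)
        exact_mod_cast this
      have hba : ((2 ^ p : ℕ) : ℝ) < (1 + ε) * ((12 ^ q : ℕ) : ℝ) := by
        rw [e2, e12, ← hexpδ, ← Real.exp_add]
        exact Real.exp_lt_exp.mpr (by linarith)
      exact main_aux hε (Nat.one_lt_pow (by omega) (by norm_num)) hab hba
        (hadOrder_pow hadOrder_twelve hadOrder_one q)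
        (hadOrder_pow hadOrder_two hadOrder_one p)
        ((Nat.even_pow).mpr ⟨by decide, by omega⟩)
  obtain ⟨N, hN⟩ := key
  refine ⟨N, fun n hn => ?_⟩
  obtain ⟨m, hme, hm1, hm2, hH⟩ := hN n hn
  refine ⟨m, hme, ?_, hm2, hH⟩
  have hn0 : (0:ℝ) ≤ (n:ℝ) := Nat.cast_nonneg n
  calc (1 - ε) * n ≤ 1 * n := mul_le_mul_of_nonneg_right (by linarith) hn0
    _ = (n:ℝ) := one_mul _
    _ ≤ m := hm1
end

section
/- There exists an absolute constant C > 0 such that for every odd prime q there is a vector u_q ∈ {−1, 1}^{ℤ_q} satisfying | |û_q(j)| − √q | ≤ √q · δ_q for every j ∈ ℤ_q, where δ_q = C·q^{−1/4}·√(log q). -/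
open scoped Real


open scoped Real
open Finset

set_option linter.unusedSectionVars false

namespace FlatFourier

variable (q : ℕ) [Fact q.Prime]

noncomputable def χc : MulChar (ZMod q) ℂ :=
  (quadraticChar (ZMod q)).ringHomComp (Int.castRingHom ℂ)

variable {q}

lemma χc_apply (k : ZMod q) : χc q k = ((quadraticChar (ZMod q) k : ℤ) : ℂ) := rfl

lemma hq2 (hq : Odd q) : ringChar (ZMod q) ≠ 2 := by
  rw [ZMod.ringChar_zmod_n]
  rintro rfl
  exact (by decide : ¬ Odd 2) hq

lemma chi_ne_one (hq : Odd q) : χc q ≠ 1 := fun h =>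
  quadraticChar_ne_one (hq2 hq) ((MulChar.ringHomComp_eq_one_iff (RingHom.injective_int _)).mp h)

lemma chi_quadratic : (χc q).IsQuadratic :=
  (quadraticChar_isQuadratic (ZMod q)).comp _

lemma norm_gauss (hq : Odd q) :
    ‖gaussSum (χc q) (ZMod.stdAddChar (N := q))‖ = Real.sqrt q := by
  have hsq : gaussSum (χc q) (ZMod.stdAddChar (N := q)) ^ 2
      = (χc q) (-1) * (Fintype.card (ZMod q) : ℂ) :=
    gaussSum_sq (chi_ne_one hq) chi_quadratic (ZMod.isPrimitive_stdAddChar q)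
  have h1 : ‖(χc q) (-1)‖ = 1 := by
    have hm : (χc q) (-1) * (χc q) (-1) = 1 := by
      rw [← map_mul]; norm_num
    have h2 : ‖(χc q) (-1)‖ * ‖(χc q) (-1)‖ = 1 := by
      rw [← norm_mul, hm, norm_one]
    nlinarith [norm_nonneg ((χc q) (-1))]
  have hn : ‖gaussSum (χc q) (ZMod.stdAddChar (N := q))‖ ^ 2 = q := by
    rw [← norm_pow, hsq, norm_mul, h1, one_mul, ZMod.card, Complex.norm_natCast]
  rw [← Real.sqrt_sq (norm_nonneg _), hn]

/-- orthogonality -/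
lemma sum_psi (j : ZMod q) :
    ∑ k : ZMod q, ZMod.stdAddChar (N := q) (j * k) = if j = 0 then (q : ℂ) else 0 := by
  split_ifs with h
  · simp only [h, zero_mul, AddChar.map_zero_eq_one, sum_const, card_univ, ZMod.card,
      nsmul_eq_mul, mul_one]
  · have := AddChar.sum_eq_zero_of_ne_one (ZMod.isPrimitive_stdAddChar q h)
    simpa only [AddChar.mulShift_apply] using this

/-- the twisted Gauss sum -/
noncomputable def G (j : ZMod q) : ℂ := ∑ k : ZMod q, χc q k * ZMod.stdAddChar (N := q) (j * k)

lemma G_zero (hq : Odd q) : G (0 : ZMod q) = 0 := by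
  have h : ∑ a : ZMod q, quadraticChar (ZMod q) a = 0 := quadraticChar_sum_zero (hq2 hq)
  have : G (0 : ZMod q) = ∑ k : ZMod q, χc q k := by
    unfold G
    refine Finset.sum_congr rfl fun k _ => ?_
    rw [zero_mul, AddChar.map_zero_eq_one, mul_one]
  rw [this]
  have : ∑ k : ZMod q, χc q k = ((∑ a : ZMod q, quadraticChar (ZMod q) a : ℤ) : ℂ) := by
    push_cast [χc_apply]
    rfl
  rw [this, h]
  norm_num

lemma norm_chi {j : ZMod q} (hj : j ≠ 0) : ‖χc q j‖ = 1 := by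
  rcases quadraticChar_dichotomy hj with h | h <;>
    simp [χc_apply, h]

lemma norm_G (hq : Odd q) {j : ZMod q} (hj : j ≠ 0) : ‖G j‖ = Real.sqrt q := by
  have key : χc q j * gaussSum (χc q) ((ZMod.stdAddChar (N := q)).mulShift j)
      = gaussSum (χc q) (ZMod.stdAddChar (N := q)) := by
    have := gaussSum_mulShift (χc q) (ZMod.stdAddChar (N := q)) (Units.mk0 j hj)
    simpa using this
  have hG : G j = gaussSum (χc q) ((ZMod.stdAddChar (N := q)).mulShift j) := by
    unfold G gaussSum
    simp [AddChar.mulShift_apply]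
  rw [hG, ← norm_gauss hq, ← key, norm_mul, norm_chi hj, one_mul]

section Prob

variable (q)

noncomputable def pp : ℝ := 1 / Real.sqrt q

noncomputable def Nset : Finset (ZMod q) :=
  univ.filter (fun k => quadraticChar (ZMod q) k = -1)

noncomputable def w (k : ZMod q) (b : Bool) : ℝ :=
  if k ∈ Nset q then (if b then pp q else 1 - pp q) else 1/2

noncomputable def μ (ω : ZMod q → Bool) : ℝ := ∏ k, w q k (ω k)

/-- indicator of the nonresidue set -/
noncomputable def indN (k : ZMod q) : ℝ := if k ∈ Nset q then 1 else 0

/-- per-coordinate deviation, as a function of the Boolean coordinate value -/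
noncomputable def devb (k : ZMod q) (b : Bool) : ℝ :=
  (if k ∈ Nset q ∧ b then 1 else 0) - pp q * indN q k

noncomputable def X (c : ZMod q → ℝ) (ω : ZMod q → Bool) : ℝ :=
  ∑ k, devb q k (ω k) * c k

noncomputable def Z (j : ZMod q) (ω : ZMod q → Bool) : ℂ :=
  ∑ k, (devb q k (ω k) : ℂ) * ZMod.stdAddChar (N := q) (j * k)

variable {q}

lemma pp_nonneg : 0 ≤ pp q := by
  unfold pp
  positivity

lemma pp_le_one (hq : Odd q) : pp q ≤ 1 := by
  have h3 : (3 : ℝ) ≤ q := by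
    have := ((Fact.out : q.Prime)).two_le
    have hne : q ≠ 2 := by rintro rfl; exact (by decide : ¬ Odd 2) hq
    have : 3 ≤ q := by omega
    exact_mod_cast this
  have h1 : (1 : ℝ) ≤ Real.sqrt q := by
    rw [show (1:ℝ) = Real.sqrt 1 by simp]
    exact Real.sqrt_le_sqrt (by linarith)
  rw [pp, div_le_one (by linarith)]
  linarith

lemma w_nonneg (hq : Odd q) (k : ZMod q) (b : Bool) : 0 ≤ w q k b := by
  unfold w
  have := pp_nonneg (q := q)
  have := pp_le_one hq
  split_ifs <;> linarith

lemma w_sum (k : ZMod q) : ∑ b : Bool, w q k b = 1 := by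
  unfold w
  rcases Classical.em (k ∈ Nset q) with h | h <;> simp [h]

lemma μ_nonneg (hq : Odd q) (ω : ZMod q → Bool) : 0 ≤ μ q ω :=
  Finset.prod_nonneg fun k _ => w_nonneg hq k (ω k)

lemma μ_total : ∑ ω : ZMod q → Bool, μ q ω = 1 := by
  unfold μ
  rw [← Fintype.prod_sum (fun (k : ZMod q) (b : Bool) => w q k b)]
  have : ∀ k : ZMod q, w q k true + w q k false = 1 := by
    intro k
    have := w_sum (q := q) k
    simpa [Fintype.sum_bool] using this
  simp [this]

/-- the elementary exponential inequality -/
lemma coord_mgf {p x : ℝ} (hp0 : 0 ≤ p) (hx : |x| ≤ 1) :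
    p * Real.exp ((1 - p) * x) + (1 - p) * Real.exp (-(p * x)) ≤ Real.exp (p * x ^ 2) := by
  have key : Real.exp x - 1 - x ≤ x ^ 2 := by
    have hb := Real.exp_bound hx (n := 2) (by norm_num)
    have : Real.exp x - (1 + x) ≤ |x| ^ 2 * (3 / 4) := by
      have h1 : ∑ m ∈ Finset.range 2, x ^ m / m.factorial = 1 + x := by
        simp [Finset.sum_range_succ]
      calc Real.exp x - (1 + x) ≤ |Real.exp x - (1 + x)| := le_abs_self _
        _ ≤ |x| ^ 2 * (3 / 4) := by
            rw [← h1]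
            convert hb using 2
            norm_num
    have hxx : |x| ^ 2 = x ^ 2 := sq_abs x
    nlinarith
  have e1 : (1 - p) * x = x + -(p * x) := by ring
  have step1 : p * Real.exp ((1 - p) * x) + (1 - p) * Real.exp (-(p * x))
      = Real.exp (-(p * x)) * (1 + p * (Real.exp x - 1)) := by
    rw [e1, Real.exp_add]
    ring
  have step2 : 1 + p * (Real.exp x - 1) ≤ Real.exp (p * (Real.exp x - 1)) := by
    have := Real.add_one_le_exp (p * (Real.exp x - 1))
    linarith
  have step3 : Real.exp (-(p * x)) * (1 + p * (Real.exp x - 1))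
      ≤ Real.exp (-(p * x)) * Real.exp (p * (Real.exp x - 1)) := by
    apply mul_le_mul_of_nonneg_left step2 (le_of_lt (Real.exp_pos _))
  have step4 : Real.exp (-(p * x)) * Real.exp (p * (Real.exp x - 1))
      = Real.exp (p * (Real.exp x - 1 - x)) := by
    rw [← Real.exp_add]
    ring_nf
  have step5 : p * (Real.exp x - 1 - x) ≤ p * x ^ 2 :=
    mul_le_mul_of_nonneg_left key hp0
  calc p * Real.exp ((1 - p) * x) + (1 - p) * Real.exp (-(p * x))
      = Real.exp (-(p * x)) * (1 + p * (Real.exp x - 1)) := step1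
    _ ≤ Real.exp (-(p * x)) * Real.exp (p * (Real.exp x - 1)) := step3
    _ = Real.exp (p * (Real.exp x - 1 - x)) := step4
    _ ≤ Real.exp (p * x ^ 2) := Real.exp_le_exp.mpr step5

/-- Chernoff bound -/
lemma chernoff (hq : Odd q) (c : ZMod q → ℝ) (hc : ∀ k, |c k| ≤ 1)
    {lam t : ℝ} (hl0 : 0 ≤ lam) (hl1 : lam ≤ 1) :
    ∑ ω ∈ univ.filter (fun ω : ZMod q → Bool => t ≤ X q c ω), μ q ω
      ≤ Real.exp (lam ^ 2 * pp q * (∑ k, indN q k) - lam * t) := by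
  have coord : ∀ k : ZMod q, ∑ b : Bool, w q k b * Real.exp (lam * (devb q k b * c k))
      ≤ Real.exp (lam ^ 2 * pp q * indN q k) := by
    intro k
    rcases Classical.em (k ∈ Nset q) with h | h
    · have hind : indN q k = 1 := by simp [indN, h]
      have hdt : devb q k true = 1 - pp q := by simp [devb, h, hind]
      have hdf : devb q k false = -(pp q) := by simp [devb, h, hind]
      have hx : |lam * c k| ≤ 1 := by
        rw [abs_mul, abs_of_nonneg hl0]
        calc lam * |c k| ≤ 1 * 1 := by
              apply mul_le_mul hl1 (hc k) (abs_nonneg _) zero_le_one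
          _ = 1 := one_mul 1
      have key := coord_mgf (pp_nonneg (q := q)) hx
      have e1 : lam * (devb q k true * c k) = (1 - pp q) * (lam * c k) := by
        rw [hdt]; ring
      have e2 : lam * (devb q k false * c k) = -(pp q * (lam * c k)) := by
        rw [hdf]; ring
      have e3 : pp q * (lam * c k) ^ 2 ≤ lam ^ 2 * pp q * indN q k := by
        rw [hind, mul_one]
        have hc2 : c k ^ 2 ≤ 1 := by
          have h := hc k
          nlinarith [sq_abs (c k), abs_nonneg (c k)]
        have h1 : (lam * c k) ^ 2 ≤ lam ^ 2 := by
          nlinarith [sq_nonneg lam, mul_nonneg (sq_nonneg lam) (sub_nonneg.mpr hc2)]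
        nlinarith [pp_nonneg (q := q), sq_nonneg lam]
      calc ∑ b : Bool, w q k b * Real.exp (lam * (devb q k b * c k))
          = pp q * Real.exp ((1 - pp q) * (lam * c k))
            + (1 - pp q) * Real.exp (-(pp q * (lam * c k))) := by
            rw [Fintype.sum_bool, e1, e2]
            simp [w, h]
        _ ≤ Real.exp (pp q * (lam * c k) ^ 2) := key
        _ ≤ Real.exp (lam ^ 2 * pp q * indN q k) := Real.exp_le_exp.mpr e3
    · have : ∀ b, devb q k b = 0 := by
        intro b; simp [devb, indN, h]
      simp [w, h, this, indN]
  have sum_nonneg' : ∀ (k : ZMod q) (b : Bool),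
      0 ≤ w q k b * Real.exp (lam * (devb q k b * c k)) := fun k b =>
    mul_nonneg (w_nonneg hq k b) (Real.exp_pos _).le
  calc ∑ ω ∈ univ.filter (fun ω : ZMod q → Bool => t ≤ X q c ω), μ q ω
      ≤ ∑ ω ∈ univ.filter (fun ω : ZMod q → Bool => t ≤ X q c ω),
          μ q ω * Real.exp (lam * (X q c ω - t)) := by
        apply Finset.sum_le_sum
        intro ω hω
        rw [Finset.mem_filter] at hω
        have h1 : (1:ℝ) ≤ Real.exp (lam * (X q c ω - t)) := by
          rw [show (1:ℝ) = Real.exp 0 by simp]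
          exact Real.exp_le_exp.mpr (mul_nonneg hl0 (by linarith [hω.2]))
        exact le_mul_of_one_le_right (μ_nonneg hq ω) h1
    _ ≤ ∑ ω : ZMod q → Bool, μ q ω * Real.exp (lam * (X q c ω - t)) := by
        apply Finset.sum_le_sum_of_subset_of_nonneg (Finset.subset_univ _)
        intro ω _ _
        exact mul_nonneg (μ_nonneg hq ω) (Real.exp_pos _).le
    _ = Real.exp (-(lam * t)) * ∑ ω : ZMod q → Bool,
          ∏ k, (w q k (ω k) * Real.exp (lam * (devb q k (ω k) * c k))) := by
        rw [Finset.mul_sum]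
        refine Finset.sum_congr rfl fun ω _ => ?_
        rw [Finset.prod_mul_distrib, ← Real.exp_sum]
        have hXs : ∑ k, lam * (devb q k (ω k) * c k) = lam * X q c ω := by
          rw [X, Finset.mul_sum]
        have hμ : (∏ k, w q k (ω k)) = μ q ω := rfl
        rw [hXs, hμ, mul_sub, Real.exp_sub, Real.exp_neg]
        field_simp
    _ = Real.exp (-(lam * t)) * ∏ k, ∑ b : Bool,
          w q k b * Real.exp (lam * (devb q k b * c k)) := by
        rw [Fintype.prod_sum (fun (k : ZMod q) (b : Bool) =>
          w q k b * Real.exp (lam * (devb q k b * c k)))]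
    _ ≤ Real.exp (-(lam * t)) * ∏ k, Real.exp (lam ^ 2 * pp q * indN q k) := by
        apply mul_le_mul_of_nonneg_left _ (Real.exp_pos _).le
        apply Finset.prod_le_prod
        · intro k _
          exact Finset.sum_nonneg fun b _ => sum_nonneg' k b
        · intro k _
          exact coord k
    _ = Real.exp (lam ^ 2 * pp q * (∑ k, indN q k) - lam * t) := by
        rw [← Real.exp_sum, ← Real.exp_add]
        congr 1
        rw [← Finset.mul_sum]
        ring

lemma norm_psi (x : ZMod q) : ‖ZMod.stdAddChar (N := q) x‖ = 1 := by
  rw [ZMod.stdAddChar_apply]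
  exact Circle.norm_coe _

variable (q)

noncomputable def cfun (j : ZMod q) (b s : Bool) : ZMod q → ℝ := fun k =>
  (if s then 1 else -1) *
    (if b then (ZMod.stdAddChar (N := q) (j * k)).re else (ZMod.stdAddChar (N := q) (j * k)).im)

variable {q}

lemma cfun_abs_le (j : ZMod q) (b s : Bool) (k : ZMod q) : |cfun q j b s k| ≤ 1 := by
  rw [cfun, abs_mul]
  have h1 : |(if s then (1:ℝ) else -1)| = 1 := by rcases s <;> simp
  have hre : |(ZMod.stdAddChar (N := q) (j * k)).re| ≤ 1 := by
    rw [← norm_psi (q := q) (j * k)]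
    exact Complex.abs_re_le_norm _
  have him : |(ZMod.stdAddChar (N := q) (j * k)).im| ≤ 1 := by
    rw [← norm_psi (q := q) (j * k)]
    exact Complex.abs_im_le_norm _
  rcases b <;> simp [h1] <;> assumption

lemma X_cfun (j : ZMod q) (b s : Bool) (ω : ZMod q → Bool) :
    X q (cfun q j b s) ω = (if s then 1 else -1) *
      (if b then (Z q j ω).re else (Z q j ω).im) := by
  unfold X cfun Z
  rcases b <;> rcases s <;>
    simp [Complex.re_sum, Complex.im_sum, Finset.mul_sum, Finset.sum_neg_distrib] <;>
    refine Finset.sum_congr rfl fun k _ => ?_ <;>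
    simp [Complex.mul_re, Complex.mul_im] <;> ring

lemma exists_good (hq : Odd q) {lam t : ℝ} (hl0 : 0 ≤ lam) (hl1 : lam ≤ 1)
    (hB : (4 * q) * Real.exp (lam ^ 2 * pp q * (∑ k, indN q k) - lam * t) < 1) :
    ∃ ω : ZMod q → Bool, ∀ j : ZMod q, ‖Z q j ω‖ ≤ 2 * t := by
  by_contra hcon
  push_neg at hcon
  have cover : ∀ ω : ZMod q → Bool, ∃ i : ZMod q × Bool × Bool,
      t ≤ X q (cfun q i.1 i.2.1 i.2.2) ω := by
    intro ω
    obtain ⟨j, hj⟩ := hcon ω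
    have habs : ‖Z q j ω‖ ≤ |(Z q j ω).re| + |(Z q j ω).im| := by
      exact Complex.norm_le_abs_re_add_abs_im _
    have hcase : t < |(Z q j ω).re| ∨ t < |(Z q j ω).im| := by
      by_contra hc
      push_neg at hc
      linarith [hc.1, hc.2]
    rcases hcase with h | h
    · rcases le_or_gt 0 (Z q j ω).re with hs | hs
      · exact ⟨⟨j, true, true⟩, by rw [X_cfun]; simp; rw [abs_of_nonneg hs] at h; linarith⟩
      · exact ⟨⟨j, true, false⟩, by rw [X_cfun]; simp; rw [abs_of_neg hs] at h; linarith⟩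
    · rcases le_or_gt 0 (Z q j ω).im with hs | hs
      · exact ⟨⟨j, false, true⟩, by rw [X_cfun]; simp; rw [abs_of_nonneg hs] at h; linarith⟩
      · exact ⟨⟨j, false, false⟩, by rw [X_cfun]; simp; rw [abs_of_neg hs] at h; linarith⟩
  have h2 : (1:ℝ) ≤ ∑ i : ZMod q × Bool × Bool,
      ∑ ω ∈ univ.filter (fun ω : ZMod q → Bool => t ≤ X q (cfun q i.1 i.2.1 i.2.2) ω), μ q ω := by
    rw [← μ_total (q := q)]
    calc ∑ ω : ZMod q → Bool, μ q ω
        ≤ ∑ ω : ZMod q → Bool, ∑ i : ZMod q × Bool × Bool,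
            (if t ≤ X q (cfun q i.1 i.2.1 i.2.2) ω then μ q ω else 0) := by
          apply Finset.sum_le_sum
          intro ω _
          obtain ⟨i0, hi0⟩ := cover ω
          have hle := Finset.single_le_sum (f := fun i : ZMod q × Bool × Bool =>
            (if t ≤ X q (cfun q i.1 i.2.1 i.2.2) ω then μ q ω else 0))
            (fun i _ => by
                           split
                           · exact μ_nonneg hq ω
                           · exact le_rfl) (Finset.mem_univ i0)
          rw [if_pos hi0] at hle
          exact hle
      _ = ∑ i : ZMod q × Bool × Bool, ∑ ω : ZMod q → Bool,
            (if t ≤ X q (cfun q i.1 i.2.1 i.2.2) ω then μ q ω else 0) := Finset.sum_comm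
      _ = _ := by
          refine Finset.sum_congr rfl fun i _ => ?_
          rw [Finset.sum_filter]
  have h3 : ∑ i : ZMod q × Bool × Bool,
      ∑ ω ∈ univ.filter (fun ω : ZMod q → Bool => t ≤ X q (cfun q i.1 i.2.1 i.2.2) ω), μ q ω
      ≤ (4 * q) * Real.exp (lam ^ 2 * pp q * (∑ k, indN q k) - lam * t) := by
    calc _ ≤ ∑ _i : ZMod q × Bool × Bool,
          Real.exp (lam ^ 2 * pp q * (∑ k, indN q k) - lam * t) :=
        Finset.sum_le_sum fun i _ =>
          chernoff hq (cfun q i.1 i.2.1 i.2.2) (cfun_abs_le i.1 i.2.1 i.2.2) hl0 hl1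
      _ = (4 * q) * Real.exp (lam ^ 2 * pp q * (∑ k, indN q k) - lam * t) := by
          rw [Finset.sum_const, Finset.card_univ]
          simp [ZMod.card]
          ring
  linarith

end Prob

section Decomp

variable (q)

noncomputable def uu (ω : ZMod q → Bool) (k : ZMod q) : ℝ :=
  if k ∈ Nset q ∧ ¬ ω k then -1 else 1

variable {q}

lemma uu_pm (ω : ZMod q → Bool) (k : ZMod q) : uu q ω k = 1 ∨ uu q ω k = -1 := by
  unfold uu; split <;> simp

lemma not_zero_mem_Nset : (0 : ZMod q) ∉ Nset q := by
  simp [Nset, quadraticChar_zero]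

lemma chi_of_mem {k : ZMod q} (h : k ∈ Nset q) : χc q k = -1 := by
  simp only [Nset, Finset.mem_filter] at h
  rw [χc_apply, h.2]
  norm_num

lemma chi_of_not_mem {k : ZMod q} (hk : k ≠ 0) (h : k ∉ Nset q) : χc q k = 1 := by
  simp only [Nset, Finset.mem_filter, Finset.mem_univ, true_and] at h
  rcases quadraticChar_dichotomy (F := ZMod q) hk with h1 | h1
  · rw [χc_apply, h1]; norm_num
  · exact absurd h1 h

/-- pointwise: 2·1_N + χ + δ₀ = 1 -/
lemma pointwise_one (k : ZMod q) :
    2 * (indN q k : ℂ) + χc q k + (if k = 0 then 1 else 0) = 1 := by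
  rcases eq_or_ne k 0 with rfl | hk
  · have h0 : χc q (0 : ZMod q) = 0 := by
      rw [χc_apply, quadraticChar_zero]; norm_num
    simp [indN, not_zero_mem_Nset, h0]
  rcases Classical.em (k ∈ Nset q) with h | h
  · rw [chi_of_mem h]
    simp only [indN, h, if_true, if_neg hk]
    push_cast
    ring
  · rw [chi_of_not_mem hk h]
    simp only [indN, h, if_false, if_neg hk]
    push_cast
    ring

/-- pointwise decomposition of the sign vector -/
lemma uu_pointwise (ω : ZMod q → Bool) (k : ZMod q) :
    (uu q ω k : ℂ) = (if k = 0 then 1 else 0) + χc q k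
      + 2 * (devb q k (ω k) : ℂ) + 2 * (pp q : ℂ) * (indN q k : ℂ) := by
  rcases eq_or_ne k 0 with rfl | hk
  · have h0 : χc q (0 : ZMod q) = 0 := by
      rw [χc_apply, quadraticChar_zero]; norm_num
    simp [uu, indN, devb, not_zero_mem_Nset, h0]
  have d1 : (if k = 0 then (1:ℂ) else 0) = 0 := if_neg hk
  rcases Classical.em (k ∈ Nset q) with h | h
  · have d2 : (indN q k : ℂ) = 1 := by simp [indN, h]
    rcases Classical.em (ω k) with hw | hw
    · have d3 : (devb q k (ω k) : ℂ) = 1 - (pp q : ℂ) := by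
        simp [devb, h, hw, indN]
      have d4 : (uu q ω k : ℂ) = 1 := by simp [uu, hw]
      rw [d1, d2, d3, d4, chi_of_mem h]
      ring
    · have d3 : (devb q k (ω k) : ℂ) = -(pp q : ℂ) := by
        simp [devb, h, hw, indN]
      have d4 : (uu q ω k : ℂ) = -1 := by simp [uu, h, hw]
      rw [d1, d2, d3, d4, chi_of_mem h]
      ring
  · have d2 : (indN q k : ℂ) = 0 := by simp [indN, h]
    have d3 : (devb q k (ω k) : ℂ) = 0 := by simp [devb, h, indN]
    have d4 : (uu q ω k : ℂ) = 1 := by simp [uu, h]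
    rw [d1, d2, d3, d4, chi_of_not_mem hk h]
    ring

variable (q)

noncomputable def S (j : ZMod q) : ℂ := ∑ k, (indN q k : ℂ) * ZMod.stdAddChar (N := q) (j * k)

variable {q}

lemma delta_sum (j : ZMod q) :
    ∑ k : ZMod q, (if k = 0 then (1:ℂ) else 0) * ZMod.stdAddChar (N := q) (j * k) = 1 := by
  have h : ∀ k : ZMod q, (if k = 0 then (1:ℂ) else 0) * ZMod.stdAddChar (N := q) (j * k)
      = (if k = 0 then ZMod.stdAddChar (N := q) (j * k) else 0) := by
    intro k; split <;> simp
  rw [Finset.sum_congr rfl fun k _ => h k,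
    Finset.sum_ite_eq' Finset.univ (0 : ZMod q) (fun k => ZMod.stdAddChar (N := q) (j * k))]
  simp

lemma S_eq (j : ZMod q) :
    2 * S q j = (if j = 0 then (q : ℂ) else 0) - 1 - G j := by
  have h : ∑ k : ZMod q, (2 * (indN q k : ℂ) + χc q k + (if k = 0 then 1 else 0))
      * ZMod.stdAddChar (N := q) (j * k) = ∑ k : ZMod q, ZMod.stdAddChar (N := q) (j * k) := by
    refine Finset.sum_congr rfl fun k _ => ?_
    rw [pointwise_one, one_mul]
  rw [sum_psi] at h
  have hpt : ∀ k : ZMod q, (2 * (indN q k : ℂ) + χc q k + (if k = 0 then 1 else 0))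
      * ZMod.stdAddChar (N := q) (j * k)
      = 2 * ((indN q k : ℂ) * ZMod.stdAddChar (N := q) (j * k))
        + χc q k * ZMod.stdAddChar (N := q) (j * k)
        + (if k = 0 then (1:ℂ) else 0) * ZMod.stdAddChar (N := q) (j * k) := fun k => by ring
  rw [Finset.sum_congr rfl fun k _ => hpt k, Finset.sum_add_distrib, Finset.sum_add_distrib,
    delta_sum, ← Finset.mul_sum] at h
  have hS : ∑ k : ZMod q, (indN q k : ℂ) * ZMod.stdAddChar (N := q) (j * k) = S q j := rfl
  have hG : ∑ k : ZMod q, χc q k * ZMod.stdAddChar (N := q) (j * k) = G j := rfl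
  rw [hS, hG] at h
  linear_combination h

/-- decomposition of the Fourier coefficient -/
lemma u_decomp (ω : ZMod q → Bool) (j : ZMod q) :
    ∑ k : ZMod q, (uu q ω k : ℂ) * ZMod.stdAddChar (N := q) (j * k)
      = ((1 : ℂ) - (pp q : ℂ)) * G j + ((1 : ℂ) - (pp q : ℂ)) + 2 * Z q j ω
        + (pp q : ℂ) * (if j = 0 then (q : ℂ) else 0) := by
  have hpt : ∀ k : ZMod q, (uu q ω k : ℂ) * ZMod.stdAddChar (N := q) (j * k)
      = (if k = 0 then (1:ℂ) else 0) * ZMod.stdAddChar (N := q) (j * k)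
        + χc q k * ZMod.stdAddChar (N := q) (j * k)
        + 2 * ((devb q k (ω k) : ℂ) * ZMod.stdAddChar (N := q) (j * k))
        + 2 * (pp q : ℂ) * ((indN q k : ℂ) * ZMod.stdAddChar (N := q) (j * k)) := by
    intro k
    rw [uu_pointwise]
    ring
  have h : ∑ k : ZMod q, (uu q ω k : ℂ) * ZMod.stdAddChar (N := q) (j * k)
      = 1 + G j + 2 * Z q j ω + 2 * (pp q : ℂ) * S q j := by
    rw [Finset.sum_congr rfl fun k _ => hpt k, Finset.sum_add_distrib, Finset.sum_add_distrib,
      Finset.sum_add_distrib, delta_sum, ← Finset.mul_sum, ← Finset.mul_sum]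
    rfl
  rw [h]
  linear_combination (pp q : ℂ) * S_eq (q := q) j

lemma two_nn (hq : Odd q) : 2 * (∑ k, indN q k) = (q : ℝ) - 1 := by
  have h := S_eq (q := q) (0 : ZMod q)
  rw [G_zero hq, if_pos rfl] at h
  have hS0 : S q (0 : ZMod q) = ((∑ k, indN q k : ℝ) : ℂ) := by
    rw [S]
    push_cast
    refine Finset.sum_congr rfl fun k _ => ?_
    rw [zero_mul, AddChar.map_zero_eq_one, mul_one]
  rw [hS0] at h
  have h2 : ((2 * (∑ k, indN q k) : ℝ) : ℂ) = (((q : ℝ) - 1 : ℝ) : ℂ) := by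
    push_cast
    push_cast at h
    linear_combination h
  exact_mod_cast h2

lemma sqrt_q_ge_one (hq : Odd q) : 1 ≤ Real.sqrt q := by
  rw [show (1:ℝ) = Real.sqrt 1 by simp]
  apply Real.sqrt_le_sqrt
  exact_mod_cast ((Fact.out : q.Prime)).one_lt.le

lemma pp_mul_sqrt (hq : Odd q) : pp q * Real.sqrt q = 1 := by
  have hs1 := sqrt_q_ge_one (q := q) hq
  rw [pp, one_div, inv_mul_cancel₀ (by linarith)]

lemma per_j (hq : Odd q) {t : ℝ} (ht : 0 ≤ t) (ω : ZMod q → Bool) (j : ZMod q)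
    (hZ : ‖Z q j ω‖ ≤ 2 * t) :
    |‖∑ k : ZMod q, (uu q ω k : ℂ) * ZMod.stdAddChar (N := q) (j * k)‖ - Real.sqrt q|
      ≤ 2 + 4 * t := by
  have hp0 : 0 ≤ pp q := pp_nonneg
  have hp1 : pp q ≤ 1 := pp_le_one hq
  have hs1 : 1 ≤ Real.sqrt q := sqrt_q_ge_one hq
  have hps : pp q * Real.sqrt q = 1 := pp_mul_sqrt hq
  have hnorm1p : ‖(1 : ℂ) - (pp q : ℂ)‖ = 1 - pp q := by
    rw [show (1 : ℂ) - (pp q : ℂ) = ((1 - pp q : ℝ) : ℂ) by push_cast; ring,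
      Complex.norm_real, Real.norm_eq_abs, abs_of_nonneg (by linarith)]
  rw [u_decomp]
  rcases eq_or_ne j 0 with rfl | hj
  · rw [G_zero hq, if_pos rfl, mul_zero, zero_add]
    set A : ℂ := ((1 : ℂ) - (pp q : ℂ)) + (pp q : ℂ) * (q : ℂ) with hA
    have hq_div : pp q * (q : ℝ) = Real.sqrt q := by
      rw [pp, one_div, inv_mul_eq_div, Real.div_sqrt]
    have hAs : ‖A - (Real.sqrt q : ℂ)‖ = |1 - pp q| := by
      have : A - (Real.sqrt q : ℂ) = ((1 - pp q + pp q * (q:ℝ) - Real.sqrt q : ℝ) : ℂ) := by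
        rw [hA]; push_cast; ring
      rw [this, Complex.norm_real, Real.norm_eq_abs, hq_div]
      congr 1
      ring
    have htri : ‖((1 : ℂ) - (pp q : ℂ)) + 2 * Z q 0 ω + (pp q : ℂ) * (q : ℂ)
        - (Real.sqrt q : ℂ)‖ ≤ |1 - pp q| + 2 * ‖Z q 0 ω‖ := by
      have : ((1 : ℂ) - (pp q : ℂ)) + 2 * Z q 0 ω + (pp q : ℂ) * (q : ℂ) - (Real.sqrt q : ℂ)
          = (A - (Real.sqrt q : ℂ)) + 2 * Z q 0 ω := by rw [hA]; ring
      rw [this]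
      calc ‖(A - (Real.sqrt q : ℂ)) + 2 * Z q 0 ω‖
          ≤ ‖A - (Real.sqrt q : ℂ)‖ + ‖2 * Z q 0 ω‖ := norm_add_le _ _
        _ = |1 - pp q| + 2 * ‖Z q 0 ω‖ := by
            rw [hAs, norm_mul]
            norm_num
    have habs : |‖((1 : ℂ) - (pp q : ℂ)) + 2 * Z q 0 ω + (pp q : ℂ) * (q : ℂ)‖ - Real.sqrt q|
        ≤ ‖((1 : ℂ) - (pp q : ℂ)) + 2 * Z q 0 ω + (pp q : ℂ) * (q : ℂ) - (Real.sqrt q : ℂ)‖ := by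
      have := abs_norm_sub_norm_le (((1 : ℂ) - (pp q : ℂ)) + 2 * Z q 0 ω + (pp q : ℂ) * (q : ℂ))
        ((Real.sqrt q : ℝ) : ℂ)
      rwa [Complex.norm_real, Real.norm_eq_abs,
        abs_of_nonneg (show (0:ℝ) ≤ Real.sqrt q by linarith)] at this
    have h1p : |1 - pp q| ≤ 1 := by rw [abs_of_nonneg (by linarith)]; linarith
    calc |‖((1 : ℂ) - (pp q : ℂ)) + 2 * Z q 0 ω + (pp q : ℂ) * (q : ℂ)‖ - Real.sqrt q|
        ≤ |1 - pp q| + 2 * ‖Z q 0 ω‖ := le_trans habs htri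
      _ ≤ 1 + 2 * (2 * t) := by
          have := hZ
          gcongr
      _ ≤ 2 + 4 * t := by linarith
  · rw [if_neg hj, mul_zero, add_zero]
    set A : ℂ := ((1 : ℂ) - (pp q : ℂ)) * G j with hA
    have hnA : ‖A‖ = (1 - pp q) * Real.sqrt q := by
      rw [hA, norm_mul, hnorm1p, norm_G hq hj]
    have h1 : |‖A + ((1 : ℂ) - (pp q : ℂ)) + 2 * Z q j ω‖ - ‖A‖|
        ≤ ‖((1 : ℂ) - (pp q : ℂ)) + 2 * Z q j ω‖ := by
      have := abs_norm_sub_norm_le (A + (((1 : ℂ) - (pp q : ℂ)) + 2 * Z q j ω)) A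
      simpa [add_assoc, add_sub_cancel_left] using this
    have h2 : ‖((1 : ℂ) - (pp q : ℂ)) + 2 * Z q j ω‖ ≤ 1 + 4 * t := by
      calc ‖((1 : ℂ) - (pp q : ℂ)) + 2 * Z q j ω‖
          ≤ ‖(1 : ℂ) - (pp q : ℂ)‖ + ‖2 * Z q j ω‖ := norm_add_le _ _
        _ ≤ (1 - pp q) + 2 * (2 * t) := by
            rw [hnorm1p, norm_mul]
            gcongr
            norm_num
        _ ≤ 1 + 4 * t := by linarith
    have h3 : |‖A‖ - Real.sqrt q| = 1 := by
      rw [hnA]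
      have : (1 - pp q) * Real.sqrt q - Real.sqrt q = -(pp q * Real.sqrt q) := by ring
      rw [this, hps]
      norm_num
    calc |‖A + ((1 : ℂ) - (pp q : ℂ)) + 2 * Z q j ω‖ - Real.sqrt q|
        ≤ |‖A + ((1 : ℂ) - (pp q : ℂ)) + 2 * Z q j ω‖ - ‖A‖| + |‖A‖ - Real.sqrt q| :=
          abs_sub_le _ _ _
      _ ≤ (1 + 4 * t) + 1 := by linarith [le_trans h1 h2, h3.le]
      _ ≤ 2 + 4 * t := by linarith

end Decomp

end FlatFourier


set_option maxHeartbeats 2000000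

open FlatFourier

/-- **Lemma 2.3.** There is an absolute constant `C > 0` such that for every odd prime `q`
there is a vector `u ∈ {-1,1}^{ℤ_q}` all of whose Fourier coefficients
`û(j) = ∑_{k ∈ ℤ_q} u(k) e^{2πi jk/q}` satisfy `| |û(j)| - √q | ≤ √q δ_q`,
with `δ_q = C q^{-1/4} √(log q)`. -/
theorem flat_fourier_sign_vector_exists :
    ∃ C : ℝ, 0 < C ∧
      ∀ (q : ℕ) [Fact q.Prime], Odd q →
        ∃ u : ZMod q → ℝ, (∀ k, u k = 1 ∨ u k = -1) ∧
          ∀ j : ZMod q,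
            |‖∑ k : ZMod q, (u k : ℂ) *
                Complex.exp (2 * π * Complex.I * (((j * k).val : ℕ) : ℂ) / q)‖
              - Real.sqrt q|
            ≤ Real.sqrt q * (C * (q : ℝ) ^ (-(1 / 4 : ℝ)) * Real.sqrt (Real.log q)) := by
  refine ⟨42, by norm_num, ?_⟩
  intro q _ hq
  have hq3 : (3:ℝ) ≤ (q:ℝ) := by
    have h2 := (Fact.out : q.Prime).two_le
    have hne : q ≠ 2 := by rintro rfl; exact (by decide : ¬ Odd 2) hq
    exact_mod_cast (by omega : 3 ≤ q)
  have hQ0 : (0:ℝ) < q := by linarith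
  set s := Real.sqrt (q:ℝ) with hs_def
  have hs2 : s^2 = (q:ℝ) := by rw [hs_def]; exact Real.sq_sqrt hQ0.le
  have hs1 : 1 ≤ s := by rw [hs_def]; exact sqrt_q_ge_one hq
  set r := Real.sqrt s with hr_def
  have hr2 : r^2 = s := by rw [hr_def]; exact Real.sq_sqrt (by linarith)
  have hr1 : 1 ≤ r := by nlinarith [Real.sqrt_nonneg s, hr_def ▸ Real.sqrt_nonneg s]
  set lg := Real.log (q:ℝ) with hlg_def
  have hlg1 : 1 ≤ lg := by
    have hexp3 : Real.exp 1 ≤ 3 := le_trans Real.exp_one_lt_d9.le (by norm_num)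
    rw [hlg_def]
    calc (1:ℝ) = Real.log (Real.exp 1) := (Real.log_exp 1).symm
      _ ≤ Real.log (q:ℝ) := Real.log_le_log (Real.exp_pos 1) (le_trans hexp3 hq3)
  have hlog_le : lg ≤ 4 * s := by
    have h1 : lg = 2 * Real.log s := by
      rw [hlg_def, ← hs2, Real.log_pow]
      push_cast
      ring
    have h2 : Real.log s ≤ s - 1 := Real.log_le_sub_one_of_pos (by linarith)
    nlinarith
  set L := Real.sqrt lg with hL_def
  have hL2 : L^2 = lg := by rw [hL_def]; exact Real.sq_sqrt (by linarith)
  have hL0 : 0 ≤ L := by rw [hL_def]; exact Real.sqrt_nonneg _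
  have hL1 : 1 ≤ L := by nlinarith
  clear_value s r lg L
  obtain ⟨lam, hlam_def⟩ : ∃ x : ℝ, x = L / (2*r) := ⟨_, rfl⟩
  obtain ⟨t, ht_def⟩ : ∃ x : ℝ, x = 10 * r * L := ⟨_, rfl⟩
  have hr0 : (0:ℝ) < r := by linarith
  have hl0 : 0 ≤ lam := by rw [hlam_def]; positivity
  have hl1 : lam ≤ 1 := by
    rw [hlam_def, div_le_one (by linarith)]
    nlinarith
  have hpp : pp q = 1/s := by rw [pp, hs_def]
  have hnn := two_nn (q := q) hq
  have hexp_arg : lam^2 * pp q * (∑ k, indN q k) - lam * t ≤ -(3 * lg) := by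
    have hlam2 : lam^2 = lg / (4*s) := by
      rw [hlam_def, div_pow, hL2]
      congr 1
      rw [mul_pow, hr2]
      norm_num
    have hsum : (∑ k, indN q k) = ((q:ℝ) - 1)/2 := by linarith
    have hlamt : lam * t = 5 * lg := by
      rw [hlam_def, ht_def]
      field_simp
      nlinarith [hL2]
    rw [hlam2, hpp, hsum, hlamt]
    have hss : s * s = (q:ℝ) := by nlinarith
    have heq : lg / (4*s) * (1/s) * (((q:ℝ)-1)/2) = lg * ((q:ℝ)-1) / (8 * (q:ℝ)) := by
      rw [← hss]
      ring
    have h8 : lg * ((q:ℝ)-1) / (8 * (q:ℝ)) ≤ lg / 8 := by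
      rw [div_le_div_iff₀ (by positivity) (by norm_num)]
      nlinarith
    rw [heq]
    linarith
  have hB : (4 * (q:ℝ)) * Real.exp (lam ^ 2 * pp q * (∑ k, indN q k) - lam * t) < 1 := by
    have h1 : Real.exp (lam ^ 2 * pp q * (∑ k, indN q k) - lam * t) ≤ Real.exp (-(3*lg)) :=
      Real.exp_le_exp.mpr hexp_arg
    have h2 : Real.exp (-(3*lg)) = ((q:ℝ)⁻¹)^3 := by
      rw [show -(3*lg) = -lg + -lg + -lg by ring, Real.exp_add, Real.exp_add, Real.exp_neg,
        hlg_def, Real.exp_log hQ0]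
      ring
    calc (4 * (q:ℝ)) * Real.exp (lam ^ 2 * pp q * (∑ k, indN q k) - lam * t)
        ≤ (4 * (q:ℝ)) * ((q:ℝ)⁻¹)^3 := by
          apply mul_le_mul_of_nonneg_left (h1.trans_eq h2) (by positivity)
      _ = 4 / (q:ℝ)^2 := by
          field_simp
      _ < 1 := by
          rw [div_lt_one (by positivity)]
          nlinarith
  obtain ⟨ω, hω⟩ := exists_good hq hl0 hl1 hB
  refine ⟨uu q ω, uu_pm ω, ?_⟩
  intro j
  have ht0 : (0:ℝ) ≤ t := by rw [ht_def]; positivity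
  have hest := per_j hq ht0 ω j (hω j)
  rw [← hs_def] at hest
  have hrw : ∑ k : ZMod q, ((uu q ω k : ℝ) : ℂ) *
      Complex.exp (2 * π * Complex.I * (((j * k).val : ℕ) : ℂ) / q)
      = ∑ k : ZMod q, ((uu q ω k : ℝ) : ℂ) * ZMod.stdAddChar (N := q) (j * k) := by
    refine Finset.sum_congr rfl fun k _ => ?_
    rw [ZMod.stdAddChar_apply, ZMod.toCircle_apply]
  rw [hrw]
  have hrpow : s * ((q:ℝ) ^ (-(1/4 : ℝ))) = r := by
    have h14 : r = (q:ℝ) ^ ((1:ℝ)/4) := by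
      rw [hr_def, hs_def, Real.sqrt_eq_rpow, Real.sqrt_eq_rpow, ← Real.rpow_mul hQ0.le]
      norm_num
    rw [hs_def, Real.sqrt_eq_rpow, ← Real.rpow_add hQ0, h14]
    norm_num
  have hrL : (1:ℝ) ≤ r * L := by nlinarith
  calc |‖∑ k : ZMod q, ((uu q ω k : ℝ) : ℂ) * ZMod.stdAddChar (N := q) (j * k)‖ - s|
      ≤ 2 + 4 * t := hest
    _ ≤ 42 * (r * L) := by
        rw [ht_def]
        nlinarith
    _ = s * (42 * (q:ℝ) ^ (-(1/4 : ℝ)) * L) := by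
        rw [show s * (42 * (q:ℝ) ^ (-(1/4 : ℝ)) * L) = 42 * (s * ((q:ℝ) ^ (-(1/4 : ℝ)))) * L by ring,
          hrpow]
        ring
end

section
/- For all constants 0 < c₀ ≤ C₀ there exist δ ∈ (0, 1) and c > 0 with the following property. Let n ∈ ℕ and let V be an n × n matrix with entries ±1 such that c₀√n ≤ s_min(V) ≤ s_max(V) ≤ C₀√n. Then any n × n random matrix Y with i.i.d. entries Y_{i,j} satisfying E Y_{i,j} = 0 and |Y_{i,j}| ≤ δ almost surely obeys P( κ(V + Y) ≤ 4·C₀/c₀ ) ≥ 1 − exp(−cn). -/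
open MeasureTheory ProbabilityTheory Matrix
open scoped ENNReal

/-- The largest singular value of an `n × N` real matrix, i.e. the operator norm of the
induced linear map between Euclidean spaces. -/
noncomputable def sMax {n N : ℕ} (A : Matrix (Fin n) (Fin N) ℝ) : ℝ :=
  ‖LinearMap.toContinuousLinearMap (Matrix.toEuclideanLin A)‖

/-- The smallest singular value of an `n × N` real matrix (`n ≤ N`), i.e.
`√λ_min(AAᵀ) = min_{‖x‖₂ = 1} ‖Aᵀ x‖₂`. -/
noncomputable def sMin {n N : ℕ} (A : Matrix (Fin n) (Fin N) ℝ) : ℝ :=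
  ⨅ x : {x : EuclideanSpace ℝ (Fin n) // ‖x‖ = 1},
    ‖Matrix.toEuclideanLin Aᵀ (x : EuclideanSpace ℝ (Fin n))‖

/-- The condition number `κ(A) = s_max(A)/s_min(A)`, with the convention `κ(A) = ∞`
whenever `s_min(A) = 0`. -/
noncomputable def condNumber {n N : ℕ} (A : Matrix (Fin n) (Fin N) ℝ) : ℝ≥0∞ :=
  if sMin A = 0 then ⊤ else ENNReal.ofReal (sMax A / sMin A)

open Metric Real
open scoped RealInnerProductSpace

/- ### Auxiliary lemmas -/

lemma exp_le_add_exp_sq (v : ℝ) : rexp v ≤ v + rexp (v ^ 2) := by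
  have h2 : 1 + v ^ 2 ≤ rexp (v ^ 2) := by
    have := Real.add_one_le_exp (v ^ 2); linarith
  rcases le_or_gt v 0 with hv | hv
  · have h1 : 1 - v ≤ rexp (-v) := by
      have := Real.add_one_le_exp (-v); linarith
    have h3 : rexp v * rexp (-v) = 1 := by rw [← Real.exp_add]; simp
    have h4 : rexp v * (1 - v) ≤ 1 :=
      calc rexp v * (1 - v) ≤ rexp v * rexp (-v) :=
            mul_le_mul_of_nonneg_left h1 (Real.exp_pos v).le
        _ = 1 := h3
    nlinarith [Real.exp_pos v, sq_nonneg v, mul_nonneg (Real.exp_pos v).le (sq_nonneg v)]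
  · rcases le_or_gt v 1 with hv1 | hv1
    · have hb : |v| ≤ 1 := by rw [abs_of_pos hv]; exact hv1
      have hB := (abs_le.1 (Real.exp_bound hb (n := 3) (by norm_num))).2
      have hsum : ∑ m ∈ Finset.range 3, v ^ m / (m.factorial : ℝ) = 1 + v + v ^ 2 / 2 := by
        simp [Finset.sum_range_succ, Nat.factorial]
      rw [hsum] at hB
      norm_num [Nat.factorial] at hB
      have habs : |v| ^ 3 ≤ v ^ 2 := by rw [abs_of_pos hv]; nlinarith
      nlinarith
    · have h : v ≤ v ^ 2 := by nlinarith
      have := Real.exp_le_exp.2 h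
      linarith

lemma mgf_le_exp_sq {Ω : Type} [MeasureSpace Ω] [IsProbabilityMeasure (ℙ : Measure Ω)]
    (X : Ω → ℝ) (hX : Measurable X) (b t : ℝ)
    (hb : ∀ᵐ ω ∂(ℙ : Measure Ω), |X ω| ≤ b) (h0 : (∫ ω, X ω) = 0) :
    mgf X ℙ t ≤ rexp (t ^ 2 * b ^ 2) := by
  have hXint : Integrable X ℙ := by
    refine (integrable_const b).mono' hX.aestronglyMeasurable ?_
    filter_upwards [hb] with ω h using by simpa using h
  have hint : Integrable (fun ω => rexp (t * X ω)) ℙ := by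
    refine (integrable_const (rexp (|t| * b))).mono'
      (Real.measurable_exp.comp (hX.const_mul t)).aestronglyMeasurable ?_
    filter_upwards [hb] with ω h
    rw [Real.norm_eq_abs, Real.abs_exp]
    exact Real.exp_le_exp.2 <| le_trans (le_abs_self _)
      (by rw [abs_mul]; exact mul_le_mul_of_nonneg_left h (abs_nonneg t))
  have hptw : ∀ᵐ ω ∂(ℙ : Measure Ω),
      rexp (t * X ω) ≤ t * X ω + rexp (t ^ 2 * b ^ 2) := by
    filter_upwards [hb] with ω h
    have hb0 : 0 ≤ b := le_trans (abs_nonneg _) h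
    calc rexp (t * X ω) ≤ t * X ω + rexp ((t * X ω) ^ 2) := exp_le_add_exp_sq _
      _ ≤ t * X ω + rexp (t ^ 2 * b ^ 2) := by
          gcongr
          have h1 : (X ω) ^ 2 ≤ b ^ 2 := by
            rw [← sq_abs]; exact pow_le_pow_left₀ (abs_nonneg _) h 2
          nlinarith [sq_nonneg t]
  have hle : mgf X ℙ t ≤ ∫ ω, (t * X ω + rexp (t ^ 2 * b ^ 2)) :=
    integral_mono_ae hint ((hXint.const_mul t).add (integrable_const _)) hptw
  rwa [integral_add (hXint.const_mul t) (integrable_const _), integral_const_mul, h0,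
    mul_zero, integral_const, probReal_univ, one_smul, zero_add] at hle

lemma integrable_exp_mul_of_abs_le {Ω : Type} [MeasureSpace Ω]
    [IsProbabilityMeasure (ℙ : Measure Ω)] {S : Ω → ℝ} (hS : Measurable S) {C t : ℝ}
    (hC : ∀ᵐ ω ∂(ℙ : Measure Ω), |S ω| ≤ C) :
    Integrable (fun ω => rexp (t * S ω)) ℙ := by
  refine (integrable_const (rexp (|t| * C))).mono'
    (Real.measurable_exp.comp (hS.const_mul t)).aestronglyMeasurable ?_
  filter_upwards [hC] with ω h
  rw [Real.norm_eq_abs, Real.abs_exp]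
  exact Real.exp_le_exp.2 <| le_trans (le_abs_self _)
    (by rw [abs_mul]; exact mul_le_mul_of_nonneg_left h (abs_nonneg t))

lemma weighted_sum_tail {Ω : Type} [MeasureSpace Ω] [IsProbabilityMeasure (ℙ : Measure Ω)]
    {ι : Type} [Fintype ι] (Z : ι → Ω → ℝ) (hmeas : ∀ i, Measurable (Z i))
    (hindep : iIndepFun Z ℙ)
    (δ : ℝ) (hδ : 0 < δ) (hbound : ∀ i, ∀ᵐ ω ∂(ℙ : Measure Ω), |Z i ω| ≤ δ)
    (hmean : ∀ i, (∫ ω, Z i ω) = 0)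
    (a : ι → ℝ) (ha : ∑ i, (a i)^2 ≤ 1) (ε : ℝ) (hε : 0 < ε) :
    ℙ {ω | ε ≤ ∑ i, a i * Z i ω} ≤ ENNReal.ofReal (rexp (-(ε^2)/(4*δ^2))) := by
  set X : ι → Ω → ℝ := fun i ω => a i * Z i ω with hX
  have hXmeas : ∀ i, Measurable (X i) := fun i => (hmeas i).const_mul _
  have hXindep : iIndepFun X ℙ :=
    hindep.comp (fun i z => a i * z) (fun i => measurable_const_mul _)
  have hXbound : ∀ i, ∀ᵐ ω ∂(ℙ : Measure Ω), |X i ω| ≤ |a i| * δ := by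
    intro i
    filter_upwards [hbound i] with ω h
    rw [hX, abs_mul]
    exact mul_le_mul_of_nonneg_left h (abs_nonneg _)
  have hXmean : ∀ i, (∫ ω, X i ω) = 0 := by
    intro i; rw [hX]; simp only
    rw [integral_const_mul, hmean i, mul_zero]
  set t := ε / (2 * δ^2) with htdef
  have ht : 0 ≤ t := by positivity
  set S : Ω → ℝ := fun ω => ∑ i, a i * Z i ω with hSdef
  have hSmeas : Measurable S := by
    apply Finset.measurable_sum
    intro i _
    exact (hmeas i).const_mul _
  have hSsum : S = ∑ i, X i := by
    funext ω; rw [hSdef, hX]; simp [Finset.sum_apply]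
  have hSb : ∀ᵐ ω ∂(ℙ : Measure Ω), |S ω| ≤ ∑ i, |a i| * δ := by
    have := MeasureTheory.ae_all_iff.2 hbound
    filter_upwards [this] with ω h
    rw [hSdef]
    calc |∑ i, a i * Z i ω| ≤ ∑ i, |a i * Z i ω| := Finset.abs_sum_le_sum_abs _ _
      _ ≤ ∑ i, |a i| * δ := by
          refine Finset.sum_le_sum fun i _ => ?_
          rw [abs_mul]
          exact mul_le_mul_of_nonneg_left (h i) (abs_nonneg _)
  have hint : Integrable (fun ω => rexp (t * S ω)) ℙ :=
    integrable_exp_mul_of_abs_le hSmeas hSb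
  have hcher := measure_ge_le_exp_mul_mgf (X := S) (μ := ℙ) (t := t) ε ht hint
  have hmgf : mgf S ℙ t ≤ rexp (t^2 * δ^2) := by
    rw [hSsum, iIndepFun.mgf_sum hXindep hXmeas Finset.univ]
    calc ∏ i, mgf (X i) ℙ t ≤ ∏ i, rexp (t^2 * (|a i| * δ)^2) := by
          refine Finset.prod_le_prod (fun i _ => mgf_nonneg) (fun i _ => ?_)
          exact mgf_le_exp_sq (X i) (hXmeas i) _ t (hXbound i) (hXmean i)
      _ = rexp (∑ i, t^2 * (|a i| * δ)^2) := by rw [← Real.exp_sum]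
      _ ≤ rexp (t^2 * δ^2) := by
          apply Real.exp_le_exp.2
          have heq : ∑ i, t^2 * (|a i| * δ)^2 = t^2 * δ^2 * ∑ i, (a i)^2 := by
            rw [Finset.mul_sum]
            congr 1; funext i
            rw [mul_pow, sq_abs]; ring
          rw [heq]
          nlinarith [sq_nonneg t, sq_nonneg δ, mul_nonneg (sq_nonneg t) (sq_nonneg δ)]
  have hexp : rexp (-t * ε) * rexp (t^2 * δ^2) = rexp (-(ε^2)/(4*δ^2)) := by
    rw [← Real.exp_add]
    congr 1
    rw [htdef]
    field_simp
    ring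
  have hfinal : (ℙ {ω | ε ≤ S ω}).toReal ≤ rexp (-(ε^2)/(4*δ^2)) := by
    calc (ℙ {ω | ε ≤ S ω}).toReal ≤ rexp (-t * ε) * mgf S ℙ t := hcher
      _ ≤ rexp (-t * ε) * rexp (t^2 * δ^2) :=
          mul_le_mul_of_nonneg_left hmgf (Real.exp_pos _).le
      _ = _ := hexp
  exact (ENNReal.le_ofReal_iff_toReal_le (measure_ne_top _ _) (Real.exp_pos _).le).2 hfinal

lemma exists_quarter_net (n : ℕ) (hn : 0 < n) :
    ∃ N : Finset (EuclideanSpace ℝ (Fin n)),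
      (∀ v ∈ N, ‖v‖ = 1) ∧
      (∀ x : EuclideanSpace ℝ (Fin n), ‖x‖ = 1 → ∃ v ∈ N, ‖x - v‖ ≤ 1/4) ∧
      (N.card : ℝ) ≤ 9 ^ n := by
  set E := EuclideanSpace ℝ (Fin n)
  have hrank : Module.finrank ℝ E = n := finrank_euclideanSpace_fin
  haveI : Nontrivial E := Module.nontrivial_of_finrank_pos (R := ℝ) (by omega)
  set P : Set (Set E) := {s | s ⊆ sphere 0 1 ∧ s.Pairwise fun a b => (1:ℝ)/4 < dist a b}
    with hP
  obtain ⟨M, hMP, hMmax⟩ : ∃ M, Maximal (· ∈ P) M := by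
    apply zorn_subset
    intro c hcP hchain
    refine ⟨⋃₀ c, ⟨?_, ?_⟩, fun s hs => Set.subset_sUnion_of_mem hs⟩
    · exact Set.sUnion_subset fun s hs => (hcP hs).1
    · intro a ha b hb hab
      obtain ⟨s, hs, has⟩ := ha
      obtain ⟨t, ht, hbt⟩ := hb
      rcases hchain.total hs ht with h | h
      · exact (hcP ht).2 (h has) hbt hab
      · exact (hcP hs).2 has (h hbt) hab
  obtain ⟨hMs, hMsep⟩ : M ⊆ sphere 0 1 ∧ M.Pairwise fun a b => (1:ℝ)/4 < dist a b := hMP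
  have hcard : ∀ F : Finset E, ↑F ⊆ M → F.card ≤ 9 ^ n := by
    intro F hF
    set B := volume (ball (0:E) 1) with hB
    have hB0 : B ≠ 0 := (measure_ball_pos volume 0 one_pos).ne'
    have hBtop : B ≠ ⊤ := measure_ball_lt_top.ne
    have hdisj : (↑F : Set E).PairwiseDisjoint fun v => ball v (1/8 : ℝ) := by
      intro a ha b hb hab
      have := hMsep (hF ha) (hF hb) hab
      exact ball_disjoint_ball (by linarith)
    have hsub : (⋃ v ∈ F, ball v (1/8 : ℝ)) ⊆ ball (0:E) (9/8) := by
      intro x hx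
      simp only [Set.mem_iUnion] at hx
      obtain ⟨v, hv, hxv⟩ := hx
      have hv1 : ‖v‖ = 1 := mem_sphere_zero_iff_norm.1 (hMs (hF hv))
      have h1 : dist x v < 1/8 := mem_ball.1 hxv
      refine mem_ball.2 ?_
      calc dist x 0 ≤ dist x v + dist v 0 := dist_triangle _ _ _
        _ < 9/8 := by rw [dist_zero_right, hv1]; linarith
    have hsum : ∑ v ∈ F, volume (ball v (1/8 : ℝ)) ≤ ENNReal.ofReal ((9/8 : ℝ) ^ n) * B := by
      rw [← measure_biUnion_finset hdisj (fun v _ => measurableSet_ball)]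
      calc volume (⋃ v ∈ F, ball v (1/8 : ℝ)) ≤ volume (ball (0:E) (9/8)) :=
            measure_mono hsub
        _ = ENNReal.ofReal ((9/8 : ℝ) ^ n) * B := by
            rw [Measure.addHaar_ball volume 0 (by norm_num : (0:ℝ) ≤ 9/8), hrank, hB]
    have heach : ∀ v ∈ F, volume (ball v (1/8 : ℝ)) = ENNReal.ofReal ((1/8 : ℝ) ^ n) * B := by
      intro v _
      rw [Measure.addHaar_ball volume v (by norm_num : (0:ℝ) ≤ 1/8), hrank, hB]
    rw [Finset.sum_congr rfl heach, Finset.sum_const, nsmul_eq_mul, ← mul_assoc] at hsum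
    have hineq : (F.card : ℝ≥0∞) * ENNReal.ofReal ((1/8 : ℝ) ^ n)
        ≤ ENNReal.ofReal ((9/8 : ℝ) ^ n) :=
      (ENNReal.mul_le_mul_iff_left hB0 hBtop).1 hsum
    have h18 : (0:ℝ) < (1/8 : ℝ) ^ n := by positivity
    have hreal : ((F.card : ℝ) * (1/8) ^ n) ≤ ((9/8 : ℝ) ^ n) := by
      rw [← ENNReal.ofReal_le_ofReal_iff (by positivity),
        ENNReal.ofReal_mul (by positivity)]
      simpa [ENNReal.ofReal_natCast] using hineq
    have h98 : ((9:ℝ)/8) ^ n = 9 ^ n * (1/8) ^ n := by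
      rw [← mul_pow]; norm_num
    rw [h98] at hreal
    have : (F.card : ℝ) ≤ (9:ℝ) ^ n := le_of_mul_le_mul_right (by linarith) h18
    exact_mod_cast this
  have hMfin : M.Finite := by
    by_contra hinf
    obtain ⟨F, hFM, hFcard⟩ :=
      Set.Infinite.exists_subset_card_eq hinf (9 ^ n + 1)
    have := hcard F hFM
    omega
  refine ⟨hMfin.toFinset, ?_, ?_, ?_⟩
  · intro v hv
    exact mem_sphere_zero_iff_norm.1 (hMs (hMfin.mem_toFinset.1 hv))
  · intro x hx
    by_contra hno
    push_neg at hno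
    have hxM : x ∉ M := by
      intro hxM
      have := hno x (hMfin.mem_toFinset.2 hxM)
      rw [sub_self, norm_zero] at this
      linarith
    have hins : insert x M ∈ P := by
      constructor
      · exact Set.insert_subset (mem_sphere_zero_iff_norm.2 hx) hMs
      · refine Set.Pairwise.insert hMsep ?_
        intro b hb hbx
        have h1 : 1/4 < dist x b := by
          rw [dist_eq_norm]
          exact hno b (hMfin.mem_toFinset.2 hb)
        exact ⟨h1, by rwa [dist_comm]⟩
    have := hMmax hins (Set.subset_insert x M)
    exact hxM (this (Set.mem_insert x M))
  · have := hcard hMfin.toFinset (by simp)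
    calc (hMfin.toFinset.card : ℝ) ≤ ((9:ℕ) ^ n : ℕ) := by exact_mod_cast this
      _ = (9:ℝ) ^ n := by push_cast; ring

lemma opNorm_le_two_mul_of_net {n : ℕ} (N : Finset (EuclideanSpace ℝ (Fin n)))
    (hsph : ∀ v ∈ N, ‖v‖ = 1)
    (hnet : ∀ x : EuclideanSpace ℝ (Fin n), ‖x‖ = 1 → ∃ v ∈ N, ‖x - v‖ ≤ 1/4)
    (T : EuclideanSpace ℝ (Fin n) →L[ℝ] EuclideanSpace ℝ (Fin n)) (K : ℝ) (hK : 0 ≤ K)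
    (h : ∀ x ∈ N, ∀ y ∈ N, ⟪T x, y⟫ ≤ K) : ‖T‖ ≤ 2 * K := by
  set M := ‖T‖ with hM
  have hM0 : 0 ≤ M := norm_nonneg T
  have claimA : ∀ x y : EuclideanSpace ℝ (Fin n), ‖x‖ = 1 → ‖y‖ = 1 →
      ⟪T x, y⟫ ≤ K + M/2 := by
    intro x y hx hy
    obtain ⟨x₀, hx₀N, hx₀⟩ := hnet x hx
    obtain ⟨y₀, hy₀N, hy₀⟩ := hnet y hy
    have hdec : ⟪T x, y⟫ = ⟪T x₀, y₀⟫ + ⟪T (x - x₀), y⟫ + ⟪T x₀, y - y₀⟫ := by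
      rw [map_sub, inner_sub_left, inner_sub_right]
      ring
    have h1 : ⟪T (x - x₀), y⟫ ≤ M/4 := by
      calc ⟪T (x - x₀), y⟫ ≤ ‖T (x - x₀)‖ * ‖y‖ := real_inner_le_norm _ _
        _ ≤ (M * ‖x - x₀‖) * 1 := by
            rw [hy]; exact mul_le_mul_of_nonneg_right (T.le_opNorm _) zero_le_one
        _ ≤ M/4 := by nlinarith [norm_nonneg (x - x₀)]
    have h2 : ⟪T x₀, y - y₀⟫ ≤ M/4 := by
      calc ⟪T x₀, y - y₀⟫ ≤ ‖T x₀‖ * ‖y - y₀‖ := real_inner_le_norm _ _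
        _ ≤ (M * ‖x₀‖) * ‖y - y₀‖ :=
            mul_le_mul_of_nonneg_right (T.le_opNorm _) (norm_nonneg _)
        _ ≤ M/4 := by rw [hsph _ hx₀N]; nlinarith [norm_nonneg (y - y₀)]
    have h3 : ⟪T x₀, y₀⟫ ≤ K := h x₀ hx₀N y₀ hy₀N
    rw [hdec]; linarith
  have claimB : ∀ x : EuclideanSpace ℝ (Fin n), ‖x‖ = 1 → ‖T x‖ ≤ K + M/2 := by
    intro x hx
    rcases eq_or_ne (T x) 0 with h0 | h0
    · rw [h0, norm_zero]; linarith
    · set y := ‖T x‖⁻¹ • T x with hy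
      have hny : ‖y‖ = 1 := by
        rw [hy, norm_smul, norm_inv, norm_norm, inv_mul_cancel₀ (norm_ne_zero_iff.2 h0)]
      have hinner : ⟪T x, y⟫ = ‖T x‖ := by
        rw [hy, real_inner_smul_right, real_inner_self_eq_norm_sq, sq]
        rw [inv_mul_cancel_left₀ (norm_ne_zero_iff.2 h0)]
      have := claimA x y hx hny
      rwa [hinner] at this
  have hfin : ‖T‖ ≤ K + M/2 := ContinuousLinearMap.opNorm_le_of_unit_norm (by linarith) claimB
  rw [← hM] at hfin
  linarith

lemma inner_toEuclideanLin {n : ℕ} (A : Matrix (Fin n) (Fin n) ℝ)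
    (x y : EuclideanSpace ℝ (Fin n)) :
    ⟪Matrix.toEuclideanLin A x, y⟫ = ∑ p : Fin n × Fin n, A p.1 p.2 * x p.2 * y p.1 := by
  rw [Matrix.toEuclideanLin_apply, PiLp.inner_apply]
  simp only [RCLike.inner_apply, conj_trivial]
  rw [Fintype.sum_prod_type]
  refine Finset.sum_congr rfl fun i _ => ?_
  simp only [Matrix.mulVec, dotProduct, Finset.mul_sum]
  refine Finset.sum_congr rfl fun j _ => ?_
  simp [mul_comm, mul_left_comm, mul_assoc]

lemma sum_sq_eq_one_of_norm_one {n : ℕ} (x : EuclideanSpace ℝ (Fin n)) (hx : ‖x‖ = 1) :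
    ∑ i, (x i)^2 = 1 := by
  rw [EuclideanSpace.norm_eq] at hx
  have h := Real.sqrt_eq_one.1 hx
  simpa [Real.norm_eq_abs, sq_abs] using h

set_option maxHeartbeats 2000000 in
/-- **Lemma 3.1.** -/
theorem perturbed_matrix_well_conditioned
    {c₀ C₀ : ℝ} (hc₀ : 0 < c₀) (hcC : c₀ ≤ C₀) :
    ∃ δ : ℝ, δ ∈ Set.Ioo (0 : ℝ) 1 ∧ ∃ c : ℝ, 0 < c ∧
      ∀ (n : ℕ) (V : Matrix (Fin n) (Fin n) ℝ),
        (∀ i j, V i j = 1 ∨ V i j = -1) →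
        c₀ * Real.sqrt n ≤ sMin V → sMin V ≤ sMax V → sMax V ≤ C₀ * Real.sqrt n →
        ∀ (Ω : Type) [MeasureSpace Ω] [IsProbabilityMeasure (ℙ : Measure Ω)]
          (Y : Ω → Matrix (Fin n) (Fin n) ℝ),
          (∀ i j, Measurable fun ω => Y ω i j) →
          (∀ i j i' j', (ℙ : Measure Ω).map (fun ω => Y ω i j)
              = (ℙ : Measure Ω).map (fun ω => Y ω i' j')) →
          iIndepFun
            (fun (p : Fin n × Fin n) ω => Y ω p.1 p.2) ℙ →
          (∀ i j, (∫ ω, Y ω i j) = 0) →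
          (∀ i j, ∀ᵐ ω ∂(ℙ : Measure Ω), |Y ω i j| ≤ δ) →
          ℙ {ω | condNumber (V + Y ω) ≤ ENNReal.ofReal (4 * C₀ / c₀)}
            ≥ ENNReal.ofReal (1 - Real.exp (-c * n)) := by
  have hδpos : 0 < min (1/2 : ℝ) (c₀/40) := lt_min (by norm_num) (by positivity)
  refine ⟨min (1/2) (c₀/40), ⟨hδpos, lt_of_le_of_lt (min_le_left _ _) (by norm_num)⟩,
    20, by norm_num, ?_⟩
  intro n V hVpm hVmin hVminmax hVmax Ω _ _ Y hYmeas hYident hYindep hYmean hYbound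
  set δ := min (1/2 : ℝ) (c₀/40) with hδdef
  have hδle : δ ≤ c₀/40 := min_le_right _ _
  rcases Nat.eq_zero_or_pos n with hn0 | hn
  · subst hn0
    simp only [Nat.cast_zero, mul_zero, Real.exp_zero, sub_self, ENNReal.ofReal_zero]
    exact zero_le
  have hnR : (0:ℝ) < n := by exact_mod_cast hn
  have hsq : 0 < Real.sqrt n := Real.sqrt_pos.2 hnR
  obtain ⟨N, hNs, hNnet, hNcard⟩ := exists_quarter_net n hn
  set K := c₀/4 * Real.sqrt n with hKdef
  have hKpos : 0 < K := by positivity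
  set Z : Fin n × Fin n → Ω → ℝ := fun p ω => Y ω p.1 p.2 with hZ
  set Bad : Set Ω :=
    ⋃ q ∈ N ×ˢ N, {ω | K ≤ ∑ p : Fin n × Fin n, (q.1 p.2 * q.2 p.1) * Z p ω} with hBad
  -- per-pair tail bound
  have hpair : ∀ q ∈ N ×ˢ N,
      ℙ {ω | K ≤ ∑ p : Fin n × Fin n, (q.1 p.2 * q.2 p.1) * Z p ω}
        ≤ ENNReal.ofReal (Real.exp (-25 * n)) := by
    intro q hq
    obtain ⟨hq1, hq2⟩ := Finset.mem_product.1 hq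
    have hxs : ∑ j, (q.1 j)^2 = 1 := sum_sq_eq_one_of_norm_one _ (hNs _ hq1)
    have hys : ∑ i, (q.2 i)^2 = 1 := sum_sq_eq_one_of_norm_one _ (hNs _ hq2)
    have hsum_a : ∑ p : Fin n × Fin n, (q.1 p.2 * q.2 p.1)^2 ≤ 1 := by
      rw [Fintype.sum_prod_type]
      have heq : ∀ i : Fin n, ∑ j, (q.1 j * q.2 i)^2 = (q.2 i)^2 * ∑ j, (q.1 j)^2 := by
        intro i
        rw [Finset.mul_sum]
        exact Finset.sum_congr rfl fun j _ => by ring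
      calc (∑ i, ∑ j, (q.1 j * q.2 i)^2) = ∑ i, (q.2 i)^2 * ∑ j, (q.1 j)^2 :=
            Finset.sum_congr rfl fun i _ => heq i
        _ = 1 := by rw [hxs]; simpa using hys
        _ ≤ 1 := le_refl 1
    have htail := weighted_sum_tail Z (fun p => hYmeas p.1 p.2) hYindep δ hδpos
      (fun p => hYbound p.1 p.2) (fun p => hYmean p.1 p.2)
      (fun p => q.1 p.2 * q.2 p.1) hsum_a K hKpos
    refine le_trans htail (ENNReal.ofReal_le_ofReal (Real.exp_le_exp.2 ?_))
    have hK2 : K^2 = c₀^2/16 * n := by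
      rw [hKdef, mul_pow, Real.sq_sqrt (Nat.cast_nonneg n)]; ring
    have hδ2 : δ^2 ≤ c₀^2/1600 := by nlinarith [hδpos.le]
    have h4 : (0:ℝ) < 4 * δ^2 := by positivity
    have hdiv : (25:ℝ) * n ≤ K^2/(4*δ^2) := by
      rw [le_div_iff₀ h4, hK2]
      nlinarith [hnR.le]
    rw [neg_div]
    linarith
  -- measurability of Bad
  have hBadMeas : MeasurableSet Bad := by
    refine Set.Finite.measurableSet_biUnion (Finset.finite_toSet _) fun q _ => ?_
    exact measurableSet_le measurable_const
      (Finset.measurable_sum _ fun p _ => ((hYmeas p.1 p.2).const_mul _))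
  -- probability of Bad
  have hBadP : ℙ Bad ≤ ENNReal.ofReal (Real.exp (-20 * n)) := by
    have hcard2 : ((N ×ˢ N).card : ℝ) ≤ 81 ^ n := by
      rw [Finset.card_product]
      push_cast
      calc (N.card : ℝ) * N.card ≤ (9:ℝ)^n * 9^n := by
            apply mul_le_mul hNcard hNcard (Nat.cast_nonneg _) (by positivity)
        _ = 81 ^ n := by rw [← mul_pow]; norm_num
    have h81 : (81:ℝ) ^ n * Real.exp (-25 * n) ≤ Real.exp (-20 * n) := by
      have he5 : (81:ℝ) ≤ Real.exp 5 := by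
        have h5 : Real.exp 5 = Real.exp 1 ^ (5:ℕ) := by
          rw [← Real.exp_nat_mul]; norm_num
        have h27 : (2.7:ℝ) ≤ Real.exp 1 :=
          le_of_lt (lt_trans (by norm_num) Real.exp_one_gt_d9)
        have hp : (2.7:ℝ) ^ (5:ℕ) ≤ Real.exp 1 ^ (5:ℕ) := pow_le_pow_left₀ (by norm_num) h27 5
        rw [h5]
        calc (81:ℝ) ≤ (2.7:ℝ) ^ (5:ℕ) := by norm_num
          _ ≤ _ := hp
      have hpow : (81:ℝ) ^ n ≤ Real.exp 5 ^ n := pow_le_pow_left₀ (by norm_num) he5 n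
      have hen : Real.exp 5 ^ n = Real.exp (5 * n) := by
        rw [← Real.exp_nat_mul, mul_comm]
      have hsplit : Real.exp (-20 * (n:ℝ)) = Real.exp (5 * n) * Real.exp (-25 * n) := by
        rw [← Real.exp_add]; congr 1; ring
      rw [hsplit]
      exact mul_le_mul_of_nonneg_right (hen ▸ hpow) (Real.exp_pos _).le
    calc ℙ Bad ≤ ∑ q ∈ N ×ˢ N,
          ℙ {ω | K ≤ ∑ p : Fin n × Fin n, (q.1 p.2 * q.2 p.1) * Z p ω} :=
          measure_biUnion_finset_le _ _
      _ ≤ ∑ _q ∈ N ×ˢ N, ENNReal.ofReal (Real.exp (-25 * n)) := Finset.sum_le_sum hpair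
      _ = ((N ×ˢ N).card : ℝ≥0∞) * ENNReal.ofReal (Real.exp (-25 * n)) := by
          rw [Finset.sum_const, nsmul_eq_mul]
      _ ≤ ENNReal.ofReal (Real.exp (-20 * n)) := by
          rw [← ENNReal.ofReal_natCast, ← ENNReal.ofReal_mul (Nat.cast_nonneg _)]
          apply ENNReal.ofReal_le_ofReal
          calc ((N ×ˢ N).card : ℝ) * Real.exp (-25 * n)
              ≤ 81 ^ n * Real.exp (-25 * n) :=
                mul_le_mul_of_nonneg_right hcard2 (Real.exp_pos _).le
            _ ≤ _ := h81
  -- the good event implies the condition-number bound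
  have hsubset : Badᶜ ⊆ {ω | condNumber (V + Y ω) ≤ ENNReal.ofReal (4 * C₀ / c₀)} := by
    intro ω hω
    simp only [hBad, Set.compl_iUnion, Set.mem_iInter, Set.mem_compl_iff,
      Set.mem_setOf_eq, not_le] at hω
    have hev : ∀ x ∈ N, ∀ y ∈ N,
        ∑ p : Fin n × Fin n, Y ω p.1 p.2 * x p.2 * y p.1 ≤ K := by
      intro x hx y hy
      have := hω (x, y) (Finset.mem_product.2 ⟨hx, hy⟩)
      refine le_of_lt (lt_of_le_of_lt (le_of_eq ?_) this)
      exact Finset.sum_congr rfl fun p _ => by rw [hZ]; ring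
    set TY := LinearMap.toContinuousLinearMap (Matrix.toEuclideanLin (Y ω)) with hTY
    set TYt := LinearMap.toContinuousLinearMap (Matrix.toEuclideanLin (Y ω)ᵀ) with hTYt
    have hYop : ‖TY‖ ≤ 2 * K := by
      refine opNorm_le_two_mul_of_net N hNs hNnet TY K hKpos.le ?_
      intro x hx y hy
      rw [hTY]
      rw [show (LinearMap.toContinuousLinearMap (Matrix.toEuclideanLin (Y ω))) x
        = Matrix.toEuclideanLin (Y ω) x from rfl]
      rw [inner_toEuclideanLin]
      exact hev x hx y hy
    have hYtop : ‖TYt‖ ≤ 2 * K := by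
      refine opNorm_le_two_mul_of_net N hNs hNnet TYt K hKpos.le ?_
      intro x hx y hy
      rw [hTYt]
      rw [show (LinearMap.toContinuousLinearMap (Matrix.toEuclideanLin (Y ω)ᵀ)) x
        = Matrix.toEuclideanLin (Y ω)ᵀ x from rfl]
      rw [inner_toEuclideanLin]
      have hre : ∑ p : Fin n × Fin n, (Y ω)ᵀ p.1 p.2 * x p.2 * y p.1
          = ∑ p : Fin n × Fin n, Y ω p.1 p.2 * y p.2 * x p.1 := by
        refine Fintype.sum_equiv (Equiv.prodComm _ _) _ _ fun p => ?_
        simp only [Equiv.prodComm_apply, Prod.swap, Matrix.transpose_apply]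
        ring
      rw [hre]
      exact hev y hy x hx
    have h2K : 2 * K = c₀/2 * Real.sqrt n := by rw [hKdef]; ring
    -- lower bound on sMin (V + Y ω)
    haveI hne : Nonempty {x : EuclideanSpace ℝ (Fin n) // ‖x‖ = 1} :=
      ⟨⟨EuclideanSpace.single ⟨0, hn⟩ 1, by simp [EuclideanSpace.norm_single]⟩⟩
    have hWmin : c₀/2 * Real.sqrt n ≤ sMin (V + Y ω) := by
      rw [sMin]
      refine le_ciInf fun x => ?_
      have hx1 : ‖(x : EuclideanSpace ℝ (Fin n))‖ = 1 := x.2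
      have htr : Matrix.toEuclideanLin (V + Y ω)ᵀ (x : EuclideanSpace ℝ (Fin n))
          = Matrix.toEuclideanLin Vᵀ (x : EuclideanSpace ℝ (Fin n))
            + Matrix.toEuclideanLin (Y ω)ᵀ (x : EuclideanSpace ℝ (Fin n)) := by
        rw [Matrix.transpose_add, map_add]; rfl
      have h1 : c₀ * Real.sqrt n
          ≤ ‖Matrix.toEuclideanLin Vᵀ (x : EuclideanSpace ℝ (Fin n))‖ := by
        refine le_trans hVmin ?_
        exact ciInf_le ⟨0, by rintro w ⟨z, rfl⟩; exact norm_nonneg _⟩ x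
      have h2 : ‖Matrix.toEuclideanLin (Y ω)ᵀ (x : EuclideanSpace ℝ (Fin n))‖
          ≤ c₀/2 * Real.sqrt n := by
        have happ : Matrix.toEuclideanLin (Y ω)ᵀ (x : EuclideanSpace ℝ (Fin n))
            = TYt (x : EuclideanSpace ℝ (Fin n)) := rfl
        rw [happ]
        calc ‖TYt (x : EuclideanSpace ℝ (Fin n))‖
            ≤ ‖TYt‖ * ‖(x : EuclideanSpace ℝ (Fin n))‖ := TYt.le_opNorm _
          _ = ‖TYt‖ := by rw [hx1, mul_one]
          _ ≤ c₀/2 * Real.sqrt n := by rw [← h2K]; exact hYtop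
      have h3 : ‖Matrix.toEuclideanLin Vᵀ (x : EuclideanSpace ℝ (Fin n))‖
          ≤ ‖Matrix.toEuclideanLin (V + Y ω)ᵀ (x : EuclideanSpace ℝ (Fin n))‖
            + ‖Matrix.toEuclideanLin (Y ω)ᵀ (x : EuclideanSpace ℝ (Fin n))‖ := by
        rw [htr]
        simpa using norm_add_le
          (Matrix.toEuclideanLin Vᵀ (x : EuclideanSpace ℝ (Fin n))
            + Matrix.toEuclideanLin (Y ω)ᵀ (x : EuclideanSpace ℝ (Fin n)))
          (-(Matrix.toEuclideanLin (Y ω)ᵀ (x : EuclideanSpace ℝ (Fin n))))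
      linarith
    have hWminpos : 0 < sMin (V + Y ω) :=
      lt_of_lt_of_le (by positivity) hWmin
    -- upper bound on sMax (V + Y ω)
    have hWmax : sMax (V + Y ω) ≤ 2 * C₀ * Real.sqrt n := by
      have hsplit : LinearMap.toContinuousLinearMap (Matrix.toEuclideanLin (V + Y ω))
          = LinearMap.toContinuousLinearMap (Matrix.toEuclideanLin V) + TY := by
        rw [hTY, map_add, map_add]
      rw [sMax, hsplit]
      calc ‖LinearMap.toContinuousLinearMap (Matrix.toEuclideanLin V) + TY‖
          ≤ ‖LinearMap.toContinuousLinearMap (Matrix.toEuclideanLin V)‖ + ‖TY‖ :=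
            norm_add_le _ _
        _ ≤ C₀ * Real.sqrt n + c₀/2 * Real.sqrt n := by
            refine add_le_add hVmax ?_
            rw [← h2K]; exact hYop
        _ ≤ 2 * C₀ * Real.sqrt n := by nlinarith
    -- conclude
    show condNumber (V + Y ω) ≤ ENNReal.ofReal (4 * C₀ / c₀)
    rw [condNumber, if_neg hWminpos.ne']
    apply ENNReal.ofReal_le_ofReal
    have hdd : sMax (V + Y ω) / sMin (V + Y ω)
        ≤ (2 * C₀ * Real.sqrt n) / (c₀/2 * Real.sqrt n) :=
      div_le_div₀ (by nlinarith [mul_pos (lt_of_lt_of_le hc₀ hcC) hsq]) hWmax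
        (by positivity) hWmin
    refine le_trans hdd (le_of_eq ?_)
    rw [div_eq_div_iff (by positivity) hc₀.ne']
    field_simp
    ring
  -- final measure computation
  have hexple : Real.exp (-20 * (n:ℝ)) ≤ 1 :=
    Real.exp_le_one_iff.2 (by nlinarith)
  calc ENNReal.ofReal (1 - Real.exp (-20 * n))
      = 1 - ENNReal.ofReal (Real.exp (-20 * n)) := by
        rw [ENNReal.ofReal_sub _ (Real.exp_pos _).le, ENNReal.ofReal_one]
    _ ≤ 1 - ℙ Bad := tsub_le_tsub_left hBadP 1
    _ = ℙ Badᶜ := (prob_compl_eq_one_sub hBadMeas).symm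
    _ ≤ ℙ {ω | condNumber (V + Y ω) ≤ ENNReal.ofReal (4 * C₀ / c₀)} :=
        measure_mono hsubset
end
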